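/- arXiv:2208.14412 — 3 statements merged into one kernel-verified Lean document; each statement's English description precedes it below -/
import Mathlib

section
/- For every two classes of graphs 𝒞 and 𝒟 and every positive integer k: 𝒞 ⊑°_FO 𝒟 if and only if C_k(𝒞) ⊑°_FO C_k(𝒟), where C_k(𝒞) = {C_k(G) : G ∈ 𝒞}. -/
open SimpleGraph

/-! ### Finite graphs and colored graphs -/

/-- A finite simple graph. -/
structure FGraph : Type 1 where
  V : Type
  [fin : Finite V]
  G : SimpleGraph V

attribute [instance] FGraph.fin

/-- A finite simple graph colored by `c` unary predicates. -/
structure CGraph (c : ℕ) : Type 1 where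
  V : Type
  [fin : Finite V]
  G : SimpleGraph V
  color : Fin c → Set V

attribute [instance] CGraph.fin

/-! ### First-order formulas over `c`-colored graphs -/

/-- First-order formulas in the language of graphs with `c` unary predicates,
with free variables among `Fin m`. -/
inductive Fml (c : ℕ) : ℕ → Type where
  | eq {m} : Fin m → Fin m → Fml c m
  | adj {m} : Fin m → Fin m → Fml c m
  | col {m} : Fin c → Fin m → Fml c m
  | not {m} : Fml c m → Fml c m
  | or {m} : Fml c m → Fml c m → Fml c m
  | ex {m} : Fml c (m + 1) → Fml c m

/-- Satisfaction of a first-order formula in a colored graph. -/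
def Fml.Sat {c : ℕ} (A : CGraph c) : {m : ℕ} → Fml c m → (Fin m → A.V) → Prop
  | _, .eq i j, v => v i = v j
  | _, .adj i j, v => A.G.Adj (v i) (v j)
  | _, .col i x, v => v x ∈ A.color i
  | _, .not φ, v => ¬ Fml.Sat A φ v
  | _, .or φ ψ, v => Fml.Sat A φ v ∨ Fml.Sat A ψ v
  | _, .ex φ, v => ∃ w : A.V, Fml.Sat A φ (Fin.snoc v w)

/-! ### Simple interpretations and transductions -/

/-- A simple interpretation of graphs in `c`-colored graphs: a pair of formulas
`(ν(x), η(x,y))` with `η` symmetric and anti-reflexive. -/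
structure Interp (c : ℕ) where
  ν : Fml c 1
  η : Fml c 2
  symm : ∀ (A : CGraph c) (u v : A.V), Fml.Sat A η ![u, v] → Fml.Sat A η ![v, u]
  irrefl : ∀ (A : CGraph c) (v : A.V), ¬ Fml.Sat A η ![v, v]

/-- The graph interpreted in a colored graph. -/
def Interp.result {c : ℕ} (I : Interp c) (A : CGraph c) :
    SimpleGraph {v : A.V // Fml.Sat A I.ν ![v]} where
  Adj u v := Fml.Sat A I.η ![u.1, v.1]
  symm := ⟨fun u v h => I.symm A u.1 v.1 h⟩
  loopless := ⟨fun v h => I.irrefl A v.1 h⟩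

/-- The `k`-copy operation on graphs: the copies of a vertex form a clique, and copies
with the same index are adjacent iff the original vertices are. -/
def copyGraph {V : Type} (G : SimpleGraph V) (k : ℕ) : SimpleGraph (V × Fin k) where
  Adj a b := (a.1 = b.1 ∧ a.2 ≠ b.2) ∨ (G.Adj a.1 b.1 ∧ a.2 = b.2)
  symm := by
    constructor
    rintro a b (⟨h1, h2⟩ | ⟨h1, h2⟩)
    · exact Or.inl ⟨h1.symm, h2.symm⟩
    · exact Or.inr ⟨h1.symm, h2.symm⟩
  loopless := by
    constructor
    rintro a (⟨_, h⟩ | ⟨h, _⟩)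
    · exact h rfl
    · exact G.irrefl h

/-- The `k`-copy operation on finite graphs. -/
def FGraph.copy (G : FGraph) (k : ℕ) : FGraph where
  V := G.V × Fin k
  G := copyGraph G.G k

/-- A transduction: a composition `I ∘ Γ_𝒰 ∘ C_k` of a copy operation, a coloring
operation and a simple interpretation. -/
structure Transduction where
  k : ℕ
  kpos : 0 < k
  c : ℕ
  I : Interp c

/-- The colored graph obtained from `C_k(G)` by a choice of coloring. -/
def Transduction.copyCGraph (T : Transduction) (G : FGraph)
    (color : Fin T.c → Set (G.V × Fin T.k)) : CGraph T.c where
  V := G.V × Fin T.k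
  G := copyGraph G.G T.k
  color := color

/-- `H ∈ T(G)` (up to isomorphism). -/
def Transduction.mem (T : Transduction) (G H : FGraph) : Prop :=
  ∃ color : Fin T.c → Set (G.V × Fin T.k),
    Nonempty (H.G ≃g T.I.result (T.copyCGraph G color))

/-- The image `T(𝒟)` of a class of graphs under a transduction. -/
def TImage (T : Transduction) (D : Set FGraph) : Set FGraph :=
  {H | ∃ G ∈ D, T.mem G H}

/-- `𝒞 ⊑_FO 𝒟` : `𝒞` is a first-order transduction of `𝒟`. -/
def SqFO (C D : Set FGraph) : Prop := ∃ T : Transduction, C ⊆ TImage T D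

/-- `𝒞 ⊑°_FO 𝒟` : `𝒞` is a non-copying first-order transduction of `𝒟`. -/
def SqFOnc (C D : Set FGraph) : Prop := ∃ T : Transduction, T.k = 1 ∧ C ⊆ TImage T D

/-- `𝒞 ≡_FO 𝒟`. -/
def EquivFO (C D : Set FGraph) : Prop := SqFO C D ∧ SqFO D C

/-- `T'` subsumes `T` : `T'(G) ⊇ T(G)` for every graph `G`. -/
def Subsumes (T' T : Transduction) : Prop := ∀ G H : FGraph, T.mem G H → T'.mem G H

/-! ### Perturbations -/

/-- The subset complementation `⊕M`: complement the adjacency between distinct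
vertices that both belong to `M`. -/
def scompGraph {V : Type} (G : SimpleGraph V) (M : Set V) : SimpleGraph V where
  Adj u v := u ≠ v ∧ (G.Adj u v ↔ ¬(u ∈ M ∧ v ∈ M))
  symm := by
    constructor
    rintro u v ⟨h1, h2⟩
    refine ⟨h1.symm, ?_, ?_⟩
    · intro h hm
      exact (h2.mp (G.adj_symm h)) ⟨hm.2, hm.1⟩
    · intro h
      exact G.adj_symm (h2.mpr fun hm => h ⟨hm.2, hm.1⟩)
  loopless := ⟨fun v h => h.1 rfl⟩

/-- Applying a finite sequence of subset complementations. -/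
def perturbGraph {V : Type} : List (Set V) → SimpleGraph V → SimpleGraph V
  | [], G => G
  | M :: Ms, G => perturbGraph Ms (scompGraph G M)

/-- `H ∈ P(G)` for a perturbation `P` that is the composition of `p` subset
complementations (up to isomorphism). -/
def PerturbMem (p : ℕ) (G H : FGraph) : Prop :=
  ∃ Z : Fin p → Set G.V, Nonempty (H.G ≃g perturbGraph (List.ofFn Z) G.G)

/-- The image `P(𝒟)` of a class under a perturbation with `p` marks. -/
def PerturbImage (p : ℕ) (D : Set FGraph) : Set FGraph :=
  {H | ∃ G ∈ D, PerturbMem p G H}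

/-- `𝒞` is a perturbation of `𝒟`. -/
def IsPerturbationOfClass (C D : Set FGraph) : Prop := ∃ p, C ⊆ PerturbImage p D

/-! ### Locality -/

/-- The ball of radius `r` around a set `S` of vertices. -/
def ballSet {V : Type} (G : SimpleGraph V) (r : ℕ) (S : Set V) : Set V :=
  {v | ∃ u ∈ S, G.Reachable u v ∧ G.dist u v ≤ r}

lemma mem_ballSet_self {V : Type} (G : SimpleGraph V) (r : ℕ) {S : Set V} {v : V}
    (hv : v ∈ S) : v ∈ ballSet G r S :=
  ⟨v, hv, Reachable.refl v, by rw [SimpleGraph.dist_self]; exact Nat.zero_le r⟩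

/-- The colored subgraph induced on a set of vertices. -/
def CGraph.induce {c : ℕ} (A : CGraph c) (S : Set A.V) : CGraph c where
  V := ↥S
  G := A.G.induce S
  color := fun i => {v | (v : A.V) ∈ A.color i}

/-- A formula is `r`-local if its truth only depends on the subgraph induced by the
ball of radius `r` around its free variables. -/
def IsLocalFml {c m : ℕ} (r : ℕ) (φ : Fml c m) : Prop :=
  ∀ (A : CGraph c) (v : Fin m → A.V),
    Fml.Sat A φ v ↔
      Fml.Sat (A.induce (ballSet A.G r (Set.range v))) φ
        (fun i => ⟨v i, mem_ballSet_self A.G r (Set.mem_range_self i)⟩)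

/-- A formula is strongly `r`-local if it is `r`-local and, whenever it holds of a
tuple, the entries of the tuple are pairwise at distance at most `r`. -/
def IsStronglyLocalFml {c m : ℕ} (r : ℕ) (φ : Fml c m) : Prop :=
  IsLocalFml r φ ∧
    ∀ (A : CGraph c) (v : Fin m → A.V), Fml.Sat A φ v →
      ∀ i j : Fin m, A.G.Reachable (v i) (v j) ∧ A.G.dist (v i) (v j) ≤ r

/-- An immersive transduction: non-copying, with strongly local formulas. -/
def Transduction.Immersive (T : Transduction) : Prop :=
  T.k = 1 ∧ ∃ r : ℕ, IsStronglyLocalFml r T.I.ν ∧ IsStronglyLocalFml r T.I.η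

/-! ### Graph classes -/

/-- A set of graphs closed under isomorphism. -/
def IsoClosed (C : Set FGraph) : Prop :=
  ∀ G H : FGraph, Nonempty (G.G ≃g H.G) → G ∈ C → H ∈ C

/-- `H` is (isomorphic to) an induced subgraph of `G`. -/
def IsInducedSubgraphOf (H G : FGraph) : Prop :=
  ∃ f : H.V → G.V, Function.Injective f ∧ ∀ u v, H.G.Adj u v ↔ G.G.Adj (f u) (f v)

/-- A hereditary class: closed under induced subgraphs. -/
def HereditaryClass (C : Set FGraph) : Prop :=
  ∀ G ∈ C, ∀ H : FGraph, IsInducedSubgraphOf H G → H ∈ C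

/-- `H` is (isomorphic to) a subgraph of `G`. -/
def IsSubgraphOf (H G : FGraph) : Prop :=
  ∃ f : H.V → G.V, Function.Injective f ∧ ∀ u v, H.G.Adj u v → G.G.Adj (f u) (f v)

/-- The monotone closure of a class: all subgraphs of its members. -/
def monotoneClosure (C : Set FGraph) : Set FGraph :=
  {H | ∃ G ∈ C, IsSubgraphOf H G}

/-- `G` contains `K_{t,t}` as a subgraph. -/
def HasKtt {V : Type} (G : SimpleGraph V) (t : ℕ) : Prop :=
  ∃ a b : Fin t → V, Function.Injective a ∧ Function.Injective b ∧
    (∀ i j, a i ≠ b j) ∧ ∀ i j, G.Adj (a i) (b j)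

/-- A weakly sparse class: some `K_{t,t}` is a subgraph of no member. -/
def WeaklySparse (C : Set FGraph) : Prop := ∃ t : ℕ, ∀ G ∈ C, ¬ HasKtt G.G t

/-- Disjoint union of two graphs. -/
def sumGraph {V W : Type} (G : SimpleGraph V) (H : SimpleGraph W) : SimpleGraph (V ⊕ W) where
  Adj a b := match a, b with
    | .inl u, .inl v => G.Adj u v
    | .inr u, .inr v => H.Adj u v
    | _, _ => False
  symm := by
    constructor
    rintro (u | u) (v | v) h
    · exact G.adj_symm h
    · exact h.elim
    · exact h.elim
    · exact H.adj_symm h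
  loopless := by
    constructor
    rintro (v | v) h
    · exact G.irrefl h
    · exact H.irrefl h

/-- Disjoint union of finite graphs. -/
def FGraph.disjUnion (G H : FGraph) : FGraph where
  V := G.V ⊕ H.V
  G := sumGraph G.G H.G

/-- An addable class: closed under disjoint unions. -/
def Addable (C : Set FGraph) : Prop :=
  ∀ G ∈ C, ∀ H ∈ C, FGraph.disjUnion G H ∈ C

/-- The degree of a vertex. -/
noncomputable def degCard (G : FGraph) (v : G.V) : ℕ := Nat.card {u : G.V // G.G.Adj v u}

/-- A class with bounded maximum degree. -/
def BddDegree (C : Set FGraph) : Prop := ∃ D : ℕ, ∀ G ∈ C, ∀ v : G.V, degCard G v ≤ D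
/-! ### Further graph constructions and parameters -/

/-- Auxiliary instance. -/
instance {α : Type} [Finite α] : Finite (Option α) :=
  Finite.of_equiv _ (Equiv.optionEquivSumPUnit.{0,0} α).symm

/-- Adding an apex vertex adjacent to all vertices. -/
def apexGraph {V : Type} (G : SimpleGraph V) : SimpleGraph (Option V) where
  Adj a b := match a, b with
    | none, none => False
    | none, some _ => True
    | some _, none => True
    | some u, some v => G.Adj u v
  symm := by
    constructor
    rintro (_ | u) (_ | v) h
    · exact h.elim
    · trivial
    · trivial
    · exact G.adj_symm h
  loopless := by
    constructor
    rintro (_ | v) h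
    · exact h.elim
    · exact G.irrefl h

/-- The class `𝒞 ∨ K₁` of graphs of `𝒞` with an added apex. -/
def JoinK1 (C : Set FGraph) : Set FGraph :=
  {H | ∃ G ∈ C, Nonempty (H.G ≃g apexGraph G.G)}

/-- The ball of radius `r` around a vertex, as a finite graph. -/
def ballFGraph (G : FGraph) (r : ℕ) (v : G.V) : FGraph where
  V := ↥(ballSet G.G r {v})
  G := G.G.induce (ballSet G.G r {v})

/-- The class `𝓛_r(ℱ)` of all balls of radius `r` of graphs of `ℱ`. -/
def LocClass (r : ℕ) (F : Set FGraph) : Set FGraph :=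
  {H | ∃ G ∈ F, ∃ v : G.V, Nonempty (H.G ≃g (ballFGraph G r v).G)}

/-- Adding a pendant vertex adjacent only to `v`. -/
def pendantGraph {V : Type} (G : SimpleGraph V) (v : V) : SimpleGraph (Option V) where
  Adj a b := match a, b with
    | none, none => False
    | none, some w => w = v
    | some u, none => u = v
    | some u, some w => G.Adj u w
  symm := by
    constructor
    rintro (_ | u) (_ | w) h
    · exact h.elim
    · exact h
    · exact h
    · exact G.adj_symm h
  loopless := by
    constructor
    rintro (_ | w) h
    · exact h.elim
    · exact G.irrefl h

/-- The finite graph obtained by adding a pendant vertex at `v`. -/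
def FGraph.addPendant (G : FGraph) (v : G.V) : FGraph where
  V := Option G.V
  G := pendantGraph G.G v

/-- `G` is obtained from `H` by adding at most `h` vertices, joined arbitrarily. -/
def NearlyOf (h : ℕ) (G H : FGraph) : Prop :=
  ∃ f : H.V → G.V, Function.Injective f ∧
    (∀ u v, H.G.Adj u v ↔ G.G.Adj (f u) (f v)) ∧
    Nat.card {v : G.V // v ∉ Set.range f} ≤ h

/-- The class `𝒞` is nearly `𝒟`. -/
def Nearly (C D : Set FGraph) : Prop :=
  ∃ h : ℕ, ∀ G ∈ C, ∃ H ∈ D, NearlyOf h G H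

/-- The class `ℰ` of all edgeless graphs. -/
def EdgelessClass : Set FGraph := {G | ∀ u v : G.V, ¬ G.G.Adj u v}

/-- All members of the class have connected components of bounded size. -/
def BddComponents (D : Set FGraph) : Prop :=
  ∃ n : ℕ, ∀ G ∈ D, ∀ v : G.V, Nat.card {u : G.V // G.G.Reachable v u} ≤ n

/-- The class of all cubic (3-regular) graphs. -/
def CubicClass : Set FGraph := {G | ∀ v : G.V, degCard G v = 3}

/-- The class `𝒫` of all paths. -/
def PathClass : Set FGraph :=
  {G | ∃ n : ℕ, Nonempty (G.G ≃g SimpleGraph.pathGraph n)}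

/-- The `ℓ`-th power of a graph: two vertices are adjacent iff their distance
is between `1` and `ℓ`. -/
def powGraph {V : Type} (G : SimpleGraph V) (ℓ : ℕ) : SimpleGraph V where
  Adj u v := u ≠ v ∧ G.Reachable u v ∧ G.dist u v ≤ ℓ
  symm := by
    constructor
    rintro u v ⟨h1, h2, h3⟩
    exact ⟨h1.symm, h2.symm, by rwa [SimpleGraph.dist_comm]⟩
  loopless := ⟨fun v h => h.1 rfl⟩

/-- The bandwidth of `G` is at most `ℓ` : `G` is a subgraph of the `ℓ`-th power
of a path. -/
def BandwidthLE (G : FGraph) (ℓ : ℕ) : Prop :=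
  ∃ n : ℕ, ∃ f : G.V → Fin n, Function.Injective f ∧
    ∀ u v, G.G.Adj u v → (powGraph (SimpleGraph.pathGraph n) ℓ).Adj (f u) (f v)

/-- A class with bounded bandwidth. -/
def BddBandwidth (D : Set FGraph) : Prop := ∃ ℓ : ℕ, ∀ G ∈ D, BandwidthLE G ℓ

/-- The class of all cubic trees: trees all of whose vertices have degree 3 or 1. -/
def CubicTreeClass : Set FGraph :=
  {G | G.G.IsTree ∧ ∀ v : G.V, degCard G v = 3 ∨ degCard G v = 1}

/-- `H` contains a clique on `s` vertices. -/
def HasCliqueN {V : Type} (H : SimpleGraph V) (s : ℕ) : Prop :=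
  ∃ f : Fin s → V, Function.Injective f ∧ ∀ i j, i ≠ j → H.Adj (f i) (f j)

/-- A chordal graph: no induced cycle of length at least 4. -/
def IsChordal {V : Type} (H : SimpleGraph V) : Prop :=
  ∀ n : ℕ, 4 ≤ n → ¬ ∃ f : Fin n → V, Function.Injective f ∧
    ∀ i j, (SimpleGraph.cycleGraph n).Adj i j ↔ H.Adj (f i) (f j)

/-- `tw(G) ≤ n` : `G` is a subgraph of a chordal graph with clique number at most `n+1`. -/
def TreewidthLE (G : FGraph) (n : ℕ) : Prop :=
  ∃ H : SimpleGraph G.V, IsChordal H ∧ G.G ≤ H ∧ ¬ HasCliqueN H (n + 2)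

/-- A class with bounded treewidth. -/
def BddTreewidth (D : Set FGraph) : Prop := ∃ n : ℕ, ∀ G ∈ D, TreewidthLE G n

/-- An interval graph: the intersection graph of a family of real intervals. -/
def IsIntervalGraph {V : Type} (H : SimpleGraph V) : Prop :=
  ∃ l r : V → ℝ, (∀ v, l v ≤ r v) ∧
    ∀ u v, u ≠ v → (H.Adj u v ↔ (l u ≤ r v ∧ l v ≤ r u))

/-- `pw(G) ≤ n` : `G` is a subgraph of an interval graph with clique number at
most `n+1`. -/
def PathwidthLE (G : FGraph) (n : ℕ) : Prop :=
  ∃ H : SimpleGraph G.V, IsIntervalGraph H ∧ G.G ≤ H ∧ ¬ HasCliqueN H (n + 2)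

/-- The class `𝒫𝒲_n` of all graphs of pathwidth at most `n`. -/
def PWClass (n : ℕ) : Set FGraph := {G | PathwidthLE G n}

/-- `G` is a forest of depth at most `n` : it is acyclic and roots may be chosen,
one in each connected component, such that every vertex is at distance at most
`n - 1` from the root of its component. -/
def ForestDepthLE (n : ℕ) (G : FGraph) : Prop :=
  G.G.IsAcyclic ∧ ∃ ρ : G.V → G.V,
    (∀ v, G.G.Reachable (ρ v) v ∧ G.G.dist (ρ v) v ≤ n - 1) ∧
    ∀ u v, G.G.Reachable u v → ρ u = ρ v

/-- The class `𝒯_n` of forests of depth at most `n`. -/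
def TreeDepthClass (n : ℕ) : Set FGraph := {G | ForestDepthLE n G}

/-- A star forest: an acyclic graph with no path on four distinct vertices. -/
def IsStarForest (G : FGraph) : Prop :=
  G.G.IsAcyclic ∧ ∀ a b c d : G.V, G.G.Adj a b → G.G.Adj b c → G.G.Adj c d →
    a = c ∨ b = d ∨ a = d

/-- The class `𝒯₂` of all star forests. -/
def StarForestClass : Set FGraph := {G | IsStarForest G}

/-- `H` is a depth-`r` shallow minor of `G` : it is obtained by contracting
pairwise disjoint connected subgraphs of radius at most `r` and deleting
vertices and edges. -/
def IsShallowMinor (r : ℕ) (H G : FGraph) : Prop :=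
  ∃ φ : H.V → Set G.V,
    (∀ v, (φ v).Nonempty) ∧
    (∀ u v, u ≠ v → Disjoint (φ u) (φ v)) ∧
    (∀ v : H.V, ∃ c : ↥(φ v), ∀ u : ↥(φ v),
      (G.G.induce (φ v)).Reachable c u ∧ (G.G.induce (φ v)).dist c u ≤ r) ∧
    (∀ u v : H.V, H.G.Adj u v → ∃ a ∈ φ u, ∃ b ∈ φ v, G.G.Adj a b)

/-- The average degree of `H` is at most `d`. -/
def AvgDegLE (H : FGraph) (d : ℕ) : Prop :=
  2 * Nat.card H.G.edgeSet ≤ d * Nat.card H.V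

/-- A class of bounded expansion: for some `f : ℕ → ℕ`, every depth-`r` shallow
minor of a member has average degree at most `f r`. -/
def BoundedExpansion (C : Set FGraph) : Prop :=
  ∃ f : ℕ → ℕ, ∀ r : ℕ, ∀ G ∈ C, ∀ H : FGraph, IsShallowMinor r H G → AvgDegLE H (f r)

/-- A proper coloring `f` of `G` with `n` colors is a star coloring if no path on
four vertices receives only two colors. -/
def IsStarColoring {V : Type} (G : SimpleGraph V) (n : ℕ) (f : V → Fin n) : Prop :=
  (∀ u v, G.Adj u v → f u ≠ f v) ∧
  ∀ a b c d, G.Adj a b → G.Adj b c → G.Adj c d → a ≠ c → b ≠ d → a ≠ d →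
    ¬ (f a = f c ∧ f b = f d)

/-- A class with bounded star chromatic number. -/
def BddStarChrom (C : Set FGraph) : Prop :=
  ∃ n : ℕ, ∀ G ∈ C, ∃ f : G.V → Fin n, IsStarColoring G.G n f

/-! ### The statement -/

/-! ### Auxiliary formula combinators -/

namespace Fml

variable {c : ℕ}

@[simp] lemma sat_eq' {m : ℕ} (A : CGraph c) (i j : Fin m) (v : Fin m → A.V) :
    (Fml.eq (c := c) i j).Sat A v ↔ v i = v j := Iff.rfl

@[simp] lemma sat_adj' {m : ℕ} (A : CGraph c) (i j : Fin m) (v : Fin m → A.V) :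
    (Fml.adj (c := c) i j).Sat A v ↔ A.G.Adj (v i) (v j) := Iff.rfl

@[simp] lemma sat_col' {m : ℕ} (A : CGraph c) (a : Fin c) (x : Fin m) (v : Fin m → A.V) :
    (Fml.col a x).Sat A v ↔ v x ∈ A.color a := Iff.rfl

@[simp] lemma sat_not' {m : ℕ} (A : CGraph c) (φ : Fml c m) (v : Fin m → A.V) :
    (Fml.not φ).Sat A v ↔ ¬ φ.Sat A v := Iff.rfl

@[simp] lemma sat_or' {m : ℕ} (A : CGraph c) (φ ψ : Fml c m) (v : Fin m → A.V) :
    (Fml.or φ ψ).Sat A v ↔ φ.Sat A v ∨ ψ.Sat A v := Iff.rfl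

@[simp] lemma sat_ex' {m : ℕ} (A : CGraph c) (φ : Fml c (m + 1)) (v : Fin m → A.V) :
    (Fml.ex φ).Sat A v ↔ ∃ w : A.V, φ.Sat A (Fin.snoc v w) := Iff.rfl

/-- Conjunction. -/
def fand {m : ℕ} (a b : Fml c m) : Fml c m := .not (.or (.not a) (.not b))

@[simp] lemma sat_fand {m : ℕ} (A : CGraph c) (a b : Fml c m) (v : Fin m → A.V) :
    (fand a b).Sat A v ↔ a.Sat A v ∧ b.Sat A v := by
  simp [fand, Fml.Sat]

/-- A false formula (built from junk formula `a`). -/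
def ffalse {m : ℕ} (a : Fml c m) : Fml c m := fand a (.not a)

@[simp] lemma sat_ffalse {m : ℕ} (A : CGraph c) (a : Fml c m) (v : Fin m → A.V) :
    ¬ (ffalse a).Sat A v := by
  simp [ffalse, Fml.Sat]

/-- Disjunction of a list, with a default. -/
def listOr {m : ℕ} : List (Fml c m) → Fml c m → Fml c m
  | [], b => ffalse b
  | φ :: l, b => .or φ (listOr l b)

@[simp] lemma sat_listOr {m : ℕ} (A : CGraph c) (l : List (Fml c m)) (b : Fml c m)
    (v : Fin m → A.V) : (listOr l b).Sat A v ↔ ∃ φ ∈ l, φ.Sat A v := by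
  induction l with
  | nil => simp [listOr]
  | cons φ l ih => simp [listOr, Fml.Sat, ih]

/-- Finite disjunction. -/
def finOr {m n : ℕ} (f : Fin n → Fml c m) (b : Fml c m) : Fml c m :=
  listOr (List.ofFn f) b

@[simp] lemma sat_finOr {m n : ℕ} (A : CGraph c) (f : Fin n → Fml c m) (b : Fml c m)
    (v : Fin m → A.V) : (finOr f b).Sat A v ↔ ∃ t : Fin n, (f t).Sat A v := by
  simp only [finOr, sat_listOr, List.mem_ofFn]
  constructor
  · rintro ⟨φ, ⟨t, rfl⟩, h⟩; exact ⟨t, h⟩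
  · rintro ⟨t, h⟩; exact ⟨f t, ⟨t, rfl⟩, h⟩

/-- Renaming of free variables. -/
def ren : {m m' : ℕ} → (Fin m → Fin m') → Fml c m → Fml c m'
  | _, _, f, .eq i j => .eq (f i) (f j)
  | _, _, f, .adj i j => .adj (f i) (f j)
  | _, _, f, .col a x => .col a (f x)
  | _, _, f, .not φ => .not (ren f φ)
  | _, _, f, .or φ ψ => .or (ren f φ) (ren f ψ)
  | _, _, f, .ex φ =>
      .ex (ren (fun i => Fin.lastCases (Fin.last _) (fun j => (f j).castSucc) i) φ)

lemma sat_ren {m m' : ℕ} (A : CGraph c) (f : Fin m → Fin m') (φ : Fml c m)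
    (v : Fin m' → A.V) : (ren f φ).Sat A v ↔ φ.Sat A (v ∘ f) := by
  induction φ generalizing m' with
  | eq i j => simp [ren, Fml.Sat]
  | adj i j => simp [ren, Fml.Sat]
  | col a x => simp [ren, Fml.Sat]
  | not φ ih => simp [ren, Fml.Sat, ih]
  | or φ ψ ih₁ ih₂ => simp [ren, Fml.Sat, ih₁, ih₂]
  | ex φ ih =>
      simp only [ren, Fml.Sat, ih]
      refine exists_congr fun w => iff_of_eq (congrArg _ ?_)
      funext i
      refine Fin.lastCases ?_ (fun j => ?_) i
      · simp
      · simp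

/-- Recoloring: replace color `a` by color `g a`. -/
def mapCol {c' : ℕ} (g : Fin c → Fin c') : {m : ℕ} → Fml c m → Fml c' m
  | _, .eq i j => .eq i j
  | _, .adj i j => .adj i j
  | _, .col a x => .col (g a) x
  | _, .not φ => .not (mapCol g φ)
  | _, .or φ ψ => .or (mapCol g φ) (mapCol g ψ)
  | _, .ex φ => .ex (mapCol g φ)

lemma sat_mapCol {c' : ℕ} (g : Fin c → Fin c') (V : Type) [Finite V]
    (Gr : SimpleGraph V) (col' : Fin c' → Set V) {m : ℕ} (φ : Fml c m)
    (v : Fin m → V) :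
    Fml.Sat ⟨V, Gr, col'⟩ (mapCol g φ) v ↔ Fml.Sat ⟨V, Gr, fun a => col' (g a)⟩ φ v := by
  induction φ <;> simp_all [mapCol, Fml.Sat]

/-- Satisfaction transfers along isomorphisms of colored graphs. -/
lemma sat_equiv (A B : CGraph c) (e : A.V ≃ B.V)
    (hadj : ∀ u v, A.G.Adj u v ↔ B.G.Adj (e u) (e v))
    (hcol : ∀ a v, v ∈ A.color a ↔ e v ∈ B.color a)
    {m : ℕ} (φ : Fml c m) (v : Fin m → A.V) :
    φ.Sat A v ↔ φ.Sat B (fun i => e (v i)) := by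
  induction φ with
  | eq i j => simp [Fml.Sat]
  | adj i j => simpa [Fml.Sat] using hadj _ _
  | col a x => simpa [Fml.Sat] using hcol _ _
  | not φ ih => simp [Fml.Sat, ih]
  | or φ ψ ih₁ ih₂ => simp [Fml.Sat, ih₁, ih₂]
  | ex φ ih =>
      simp only [Fml.Sat]
      constructor
      · rintro ⟨w, h⟩
        refine ⟨e w, ?_⟩
        have he : (fun i => e ((Fin.snoc v w : Fin _ → A.V) i)) = Fin.snoc (fun i => e (v i)) (e w) := by
          funext i; refine Fin.lastCases ?_ (fun j => ?_) i <;> simp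
        rw [← he]; exact (ih (Fin.snoc v w)).mp h
      · rintro ⟨w, h⟩
        refine ⟨e.symm w, (ih (Fin.snoc v (e.symm w))).mpr ?_⟩
        have he : (fun i => e ((Fin.snoc v (e.symm w) : Fin _ → A.V) i)) = Fin.snoc (fun i => e (v i)) w := by
          funext i; refine Fin.lastCases ?_ (fun j => ?_) i <;> simp
        rw [he]; exact h

/-- Symmetrization of a binary formula. -/
def symmetrize (θ : Fml c 2) : Fml c 2 := fand (.not (.eq 0 1)) (.or θ (ren ![1, 0] θ))

lemma comp_swap {α : Type*} (u v : α) : ![u, v] ∘ ![(1 : Fin 2), 0] = ![v, u] := by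
  funext i; fin_cases i <;> simp

lemma sat_symmetrize (A : CGraph c) (θ : Fml c 2) (u v : A.V) :
    (symmetrize θ).Sat A ![u, v] ↔ u ≠ v ∧ (θ.Sat A ![u, v] ∨ θ.Sat A ![v, u]) := by
  simp [symmetrize, Fml.Sat, sat_ren, comp_swap]

lemma symmetrize_symm (A : CGraph c) (θ : Fml c 2) (u v : A.V) :
    (symmetrize θ).Sat A ![u, v] → (symmetrize θ).Sat A ![v, u] := by
  rw [sat_symmetrize, sat_symmetrize]
  rintro ⟨h1, h2⟩; exact ⟨Ne.symm h1, h2.symm⟩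

lemma symmetrize_irrefl (A : CGraph c) (θ : Fml c 2) (v : A.V) :
    ¬ (symmetrize θ).Sat A ![v, v] := by
  rw [sat_symmetrize]; rintro ⟨h, -⟩; exact h rfl

end Fml
/-! ### Simulating a copy graph in its base, and a base in its copy -/

namespace CopyCancel

open Fml

variable {c k : ℕ}

/-- Translate a formula over a `c`-colored copy graph `C_k(G)` into a formula over the
`c*k`-colored base graph `G`, given a fixed assignment of copy-indices to free variables. -/
def trC : {m : ℕ} → Fml c m → (Fin m → Fin k) → Fml (c * k) m
  | _, .eq i j, ι => if ι i = ι j then .eq i j else .ffalse (.eq i j)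
  | _, .adj i j, ι => if ι i = ι j then .adj i j else .eq i j
  | _, .col a x, ι => .col (finProdFinEquiv (a, ι x)) x
  | _, .not φ, ι => .not (trC φ ι)
  | _, .or φ ψ, ι => .or (trC φ ι) (trC ψ ι)
  | _, .ex φ, ι =>
      .ex (finOr (fun t => trC φ (Fin.snoc ι t)) (.eq (Fin.last _) (Fin.last _)))

variable (V : Type) [fV : Finite V] (Gr : SimpleGraph V)

/-- The copy graph as a `c`-colored graph. -/
abbrev Acopy (colC : Fin c → Set (V × Fin k)) : CGraph c :=
  ⟨V × Fin k, copyGraph Gr k, colC⟩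

/-- The base graph with the colors of the copy graph spread out. -/
abbrev Abase (colC : Fin c → Set (V × Fin k)) : CGraph (c * k) :=
  ⟨V, Gr, fun b => {v | (v, (finProdFinEquiv.symm b).2) ∈ colC (finProdFinEquiv.symm b).1}⟩

lemma trC_sat (colC : Fin c → Set (V × Fin k)) :
    ∀ {m : ℕ} (φ : Fml c m) (ι : Fin m → Fin k) (w : Fin m → V),
    (trC φ ι).Sat (Abase V Gr colC) w ↔ φ.Sat (Acopy V Gr colC) (fun i => (w i, ι i)) := by
  intro m φ
  induction φ with
  | eq i j =>
      intro ι w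
      simp only [trC]
      split_ifs with h
      · simp [Fml.Sat, Abase, Acopy, Prod.ext_iff, h]
      · simp only [sat_ffalse, Fml.Sat, Acopy, Prod.ext_iff, false_iff]
        tauto
  | adj i j =>
      intro ι w
      simp only [trC]
      split_ifs with h
      · simp only [Fml.Sat, Abase, Acopy, copyGraph, h]
        tauto
      · simp only [Fml.Sat, Abase, Acopy, copyGraph]
        constructor
        · intro hw; exact Or.inl ⟨hw, h⟩
        · rintro (⟨hw, -⟩ | ⟨-, hι⟩)
          · exact hw
          · exact absurd hι h
  | col a x =>
      intro ι w
      simp only [trC, sat_col', Abase, Acopy, Set.mem_setOf_eq, Equiv.symm_apply_apply]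
  | not φ ih => intro ι w; simp [trC, Fml.Sat, ih]
  | or φ ψ ih₁ ih₂ => intro ι w; simp [trC, Fml.Sat, ih₁, ih₂]
  | ex φ ih =>
      intro ι w
      simp only [trC, Fml.Sat, sat_finOr, ih]
      constructor
      · rintro ⟨u, t, h⟩
        refine ⟨(u, t), ?_⟩
        have he : (fun i => ((Fin.snoc w u : Fin _ → V) i, (Fin.snoc ι t : Fin _ → Fin k) i))
            = Fin.snoc (fun i => (w i, ι i)) (u, t) := by
          funext i; refine Fin.lastCases ?_ (fun j => ?_) i <;> simp
        rw [← he]; exact h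
      · rintro ⟨⟨u, t⟩, h⟩
        refine ⟨u, t, ?_⟩
        have he : (fun i => ((Fin.snoc w u : Fin _ → V) i, (Fin.snoc ι t : Fin _ → Fin k) i))
            = Fin.snoc (fun i => (w i, ι i)) (u, t) := by
          funext i; refine Fin.lastCases ?_ (fun j => ?_) i <;> simp
        rw [he]; exact h

/-- Translate a formula over a `c`-colored base graph into a formula over the copy graph
with `k` extra index colors, relativizing quantifiers to the slice of index `t0`. -/
def trR (t0 : Fin k) : {m : ℕ} → Fml c m → Fml (c + k) m
  | _, .eq i j => .eq i j
  | _, .adj i j => .adj i j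
  | _, .col a x => .col (finSumFinEquiv (Sum.inl a)) x
  | _, .not φ => .not (trR t0 φ)
  | _, .or φ ψ => .or (trR t0 φ) (trR t0 ψ)
  | _, .ex φ =>
      .ex (fand (.col (finSumFinEquiv (Sum.inr t0)) (Fin.last _)) (trR t0 φ))

variable (colO : Fin c → Set V)

/-- The base graph as a `c`-colored graph. -/
abbrev AbaseR : CGraph c := ⟨V, Gr, colO⟩

/-- The copy graph with lifted colors and index colors. -/
abbrev AcopyR : CGraph (c + k) :=
  ⟨V × Fin k, copyGraph Gr k,
    fun b => Sum.elim (fun a => {p : V × Fin k | p.1 ∈ colO a})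
      (fun t => {p : V × Fin k | p.2 = t}) (finSumFinEquiv.symm b)⟩

lemma trR_sat (t0 : Fin k) :
    ∀ {m : ℕ} (φ : Fml c m) (w : Fin m → V),
    (trR t0 φ).Sat (AcopyR V Gr colO (k := k)) (fun i => (w i, t0)) ↔
      φ.Sat (AbaseR V Gr colO) w := by
  intro m φ
  induction φ with
  | eq i j => intro w; simp [trR, Fml.Sat, AcopyR, AbaseR, Prod.ext_iff]
  | adj i j =>
      intro w
      simp only [trR, Fml.Sat, AcopyR, AbaseR, copyGraph]
      tauto
  | col a x => intro w; simp [trR, Fml.Sat, AcopyR, AbaseR]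
  | not φ ih => intro w; simp [trR, Fml.Sat, ih]
  | or φ ψ ih₁ ih₂ => intro w; simp [trR, Fml.Sat, ih₁, ih₂]
  | ex φ ih =>
      intro w
      simp only [trR, sat_ex', sat_fand, sat_col']
      constructor
      · rintro ⟨⟨u, t⟩, ht, h⟩
        rw [Fin.snoc_last] at ht
        have ht' : t = t0 := by simpa [AcopyR] using ht
        subst ht'
        refine ⟨u, ?_⟩
        have he : Fin.snoc (fun i => (w i, t)) (u, t)
            = (fun i => ((Fin.snoc w u : Fin _ → V) i, t)) := by
          funext i; refine Fin.lastCases ?_ (fun j => ?_) i <;> simp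
        rw [he] at h
        exact (ih (Fin.snoc w u)).mp h
      · rintro ⟨u, h⟩
        refine ⟨(u, t0), ?_, ?_⟩
        · rw [Fin.snoc_last]; simp [AcopyR]
        · have he : Fin.snoc (fun i => (w i, t0)) (u, t0)
              = (fun i => ((Fin.snoc w u : Fin _ → V) i, t0)) := by
            funext i; refine Fin.lastCases ?_ (fun j => ?_) i <;> simp
          rw [he]
          exact (ih (Fin.snoc w u)).mpr h

/-- Adjacency in a 1-copy graph. -/
lemma copy1_adj {X : Type} (Gx : SimpleGraph X) (p q : X × Fin 1) :
    (copyGraph Gx 1).Adj p q ↔ Gx.Adj p.1 q.1 := by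
  have h : p.2 = q.2 := Subsingleton.elim _ _
  simp [copyGraph, h]

end CopyCancel
namespace CopyCancel

open Fml

/-! ### Evaluation helpers -/

@[simp] lemma snoc2_0 {α : Type*} (v : Fin 1 → α) (w : α) :
    (Fin.snoc v w : Fin 2 → α) 0 = v 0 := by
  have h : (0 : Fin 2) = Fin.castSucc 0 := rfl
  rw [h, Fin.snoc_castSucc]

@[simp] lemma snoc2_1 {α : Type*} (v : Fin 1 → α) (w : α) :
    (Fin.snoc v w : Fin 2 → α) 1 = w := by
  have h : (1 : Fin 2) = Fin.last 1 := rfl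
  rw [h, Fin.snoc_last]

@[simp] lemma snoc3_0 {α : Type*} (v : Fin 2 → α) (w : α) :
    (Fin.snoc v w : Fin 3 → α) 0 = v 0 := by
  have h : (0 : Fin 3) = Fin.castSucc 0 := rfl
  rw [h, Fin.snoc_castSucc]

@[simp] lemma snoc3_1 {α : Type*} (v : Fin 2 → α) (w : α) :
    (Fin.snoc v w : Fin 3 → α) 1 = v 1 := by
  have h : (1 : Fin 3) = Fin.castSucc 1 := rfl
  rw [h, Fin.snoc_castSucc]

@[simp] lemma snoc3_2 {α : Type*} (v : Fin 2 → α) (w : α) :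
    (Fin.snoc v w : Fin 3 → α) 2 = w := by
  have h : (2 : Fin 3) = Fin.last 2 := rfl
  rw [h, Fin.snoc_last]

@[simp] lemma snoc4_0 {α : Type*} (v : Fin 3 → α) (w : α) :
    (Fin.snoc v w : Fin 4 → α) 0 = v 0 := by
  have h : (0 : Fin 4) = Fin.castSucc 0 := rfl
  rw [h, Fin.snoc_castSucc]

@[simp] lemma snoc4_1 {α : Type*} (v : Fin 3 → α) (w : α) :
    (Fin.snoc v w : Fin 4 → α) 1 = v 1 := by
  have h : (1 : Fin 4) = Fin.castSucc 1 := rfl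
  rw [h, Fin.snoc_castSucc]

@[simp] lemma snoc4_2 {α : Type*} (v : Fin 3 → α) (w : α) :
    (Fin.snoc v w : Fin 4 → α) 2 = v 2 := by
  have h : (2 : Fin 4) = Fin.castSucc 2 := rfl
  rw [h, Fin.snoc_castSucc]

@[simp] lemma snoc4_3 {α : Type*} (v : Fin 3 → α) (w : α) :
    (Fin.snoc v w : Fin 4 → α) 3 = w := by
  have h : (3 : Fin 4) = Fin.last 3 := rfl
  rw [h, Fin.snoc_last]

lemma comp_sel1 {α : Type*} (vv : Fin 2 → α) : vv ∘ ![1] = fun _ => vv 1 := by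
  funext i; fin_cases i; simp

lemma comp_sel23 {α : Type*} (vv : Fin 4 → α) : vv ∘ ![2, 3] = ![vv 2, vv 3] := by
  funext i; fin_cases i <;> simp

lemma copy_adj {X : Type} (Gx : SimpleGraph X) (k : ℕ) (p q : X × Fin k) :
    (copyGraph Gx k).Adj p q ↔ (p.1 = q.1 ∧ p.2 ≠ q.2) ∨ (Gx.Adj p.1 q.1 ∧ p.2 = q.2) :=
  Iff.rfl

/-- Dropping a `Fin 1` factor. -/
def dropOne (X : Type) : X × Fin 1 ≃ X where
  toFun p := p.1
  invFun x := (x, 0)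
  left_inv := by rintro ⟨x, i⟩; exact Prod.ext rfl (Subsingleton.elim _ _)
  right_inv x := rfl

/-! ### Formulas defining the copy structure -/

section ForwardFml

variable {c k : ℕ}

/-- "x has copy-index `t`". -/
def idxc (t : Fin k) {m : ℕ} (x : Fin m) : Fml (c + k) m :=
  .col (finSumFinEquiv (Sum.inr t)) x

/-- "x and y have the same copy-index". -/
def sameIdx {m : ℕ} (x y : Fin m) : Fml (c + k) m :=
  finOr (fun t => fand (idxc t x) (idxc t y)) (.eq x x)

/-- "x and y are copies of the same original vertex". -/
def sameOrig {m : ℕ} (x y : Fin m) : Fml (c + k) m :=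
  .or (.eq x y) (fand (.adj x y) (.not (sameIdx x y)))

/-- The relativized vertex formula. -/
def nuF (t0 : Fin k) (ν : Fml c 1) : Fml (c + k) 1 :=
  .ex (fand (idxc t0 1) (fand (sameOrig 0 1) (ren ![1] (trR t0 ν))))

/-- The relativized edge formula (raw, unsymmetrized). -/
def etaRaw (t0 : Fin k) (η : Fml c 2) : Fml (c + k) 2 :=
  .or (fand (sameOrig 0 1) (.not (sameIdx 0 1)))
      (fand (sameIdx 0 1)
        (.ex (.ex (fand (idxc t0 2) (fand (idxc t0 3)
          (fand (sameOrig 0 2) (fand (sameOrig 1 3) (ren ![2, 3] (trR t0 η)))))))))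

variable (V : Type) [fV : Finite V] (Gr : SimpleGraph V) (colO : Fin c → Set V)

lemma sat_idxc {m : ℕ} (t : Fin k) (x : Fin m) (v : Fin m → V × Fin k) :
    (idxc (c := c) t x).Sat (AcopyR V Gr colO) v ↔ (v x).2 = t := by
  simp [idxc, AcopyR]

lemma sat_sameIdx {m : ℕ} (x y : Fin m) (v : Fin m → V × Fin k) :
    (sameIdx (c := c) x y).Sat (AcopyR V Gr colO) v ↔ (v x).2 = (v y).2 := by
  simp only [sameIdx, sat_finOr, sat_fand, sat_idxc]
  constructor
  · rintro ⟨t, rfl, h⟩; exact h.symm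
  · rintro h; exact ⟨(v y).2, h, rfl⟩

lemma sat_sameOrig {m : ℕ} (x y : Fin m) (v : Fin m → V × Fin k) :
    (sameOrig (c := c) x y).Sat (AcopyR V Gr colO) v ↔ (v x).1 = (v y).1 := by
  simp only [sameOrig, sat_or', sat_eq', sat_fand, sat_adj', sat_not',
    sat_sameIdx]
  constructor
  · rintro (h | ⟨hadj, hne⟩)
    · rw [h]
    · rcases (copy_adj Gr k _ _).mp hadj with ⟨h, -⟩ | ⟨-, h⟩
      · exact h
      · exact absurd h hne
  · intro h
    by_cases hi : (v x).2 = (v y).2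
    · exact Or.inl (Prod.ext h hi)
    · exact Or.inr ⟨(copy_adj Gr k _ _).mpr (Or.inl ⟨h, hi⟩), hi⟩

lemma sat_nuF (t0 : Fin k) (ν : Fml c 1) (p : V × Fin k) :
    (nuF t0 ν).Sat (AcopyR V Gr colO) ![p] ↔ ν.Sat (AbaseR V Gr colO) (fun _ => p.1) := by
  simp only [nuF, sat_ex', sat_fand, sat_idxc, sat_sameOrig, sat_ren]
  constructor
  · rintro ⟨⟨b, t⟩, ht, hor, hν⟩
    simp only [snoc2_1] at ht
    simp only [snoc2_0, snoc2_1, Matrix.cons_val_zero] at hor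
    rw [comp_sel1] at hν
    simp only [snoc2_1] at hν
    rw [ht] at hν
    have he : (fun (_ : Fin 1) => ((b, t0) : V × Fin k))
        = fun i => ((fun _ => b) i, t0) := rfl
    rw [he, trR_sat] at hν
    rw [hor]
    exact hν
  · intro hν
    refine ⟨(p.1, t0), ?_⟩
    simp only [snoc2_0, snoc2_1, Matrix.cons_val_zero]
    refine ⟨by trivial, by trivial, ?_⟩
    rw [comp_sel1]
    simp only [snoc2_1]
    have he : (fun (_ : Fin 1) => ((p.1, t0) : V × Fin k))
        = fun i => ((fun _ => p.1) i, t0) := rfl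
    rw [he, trR_sat]
    exact hν

lemma sat_etaRaw (t0 : Fin k) (η : Fml c 2) (p q : V × Fin k) :
    (etaRaw t0 η).Sat (AcopyR V Gr colO) ![p, q] ↔
      ((p.1 = q.1 ∧ p.2 ≠ q.2) ∨
        (p.2 = q.2 ∧ η.Sat (AbaseR V Gr colO) ![p.1, q.1])) := by
  simp only [etaRaw, sat_or', sat_fand, sat_not', sat_ex', sat_idxc, sat_sameIdx,
    sat_sameOrig, sat_ren, Matrix.cons_val_zero, Matrix.cons_val_one, Matrix.head_cons]
  constructor
  · rintro (⟨h1, h2⟩ | ⟨h1, ⟨a, t⟩, ⟨b, t'⟩, h3, h4, h5, h6, h7⟩)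
    · exact Or.inl ⟨h1, h2⟩
    · refine Or.inr ⟨h1, ?_⟩
      simp only [snoc4_2, snoc4_3, snoc3_2, snoc4_0, snoc4_1, snoc3_0, snoc3_1,
        Matrix.cons_val_zero, Matrix.cons_val_one, Matrix.head_cons] at h3 h4 h5 h6
      rw [comp_sel23] at h7
      simp only [snoc4_2, snoc4_3, snoc3_2] at h7
      rw [h3, h4] at h7
      have he : (![((a, t0) : V × Fin k), (b, t0)])
          = fun i => ((![a, b] : Fin 2 → V) i, t0) := by
        funext i; fin_cases i <;> simp
      rw [he, trR_sat] at h7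
      rw [h5, h6]
      exact h7
  · rintro (⟨h1, h2⟩ | ⟨h1, h2⟩)
    · exact Or.inl ⟨h1, h2⟩
    · refine Or.inr ⟨h1, (p.1, t0), (q.1, t0), ?_⟩
      simp only [snoc4_2, snoc4_3, snoc3_2, snoc4_0, snoc4_1, snoc3_0, snoc3_1,
        Matrix.cons_val_zero, Matrix.cons_val_one, Matrix.head_cons]
      refine ⟨by trivial, by trivial, by trivial, by trivial, ?_⟩
      rw [comp_sel23]
      simp only [snoc4_2, snoc4_3, snoc3_2]
      have he : (![((p.1, t0) : V × Fin k), (q.1, t0)])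
          = fun i => ((![p.1, q.1] : Fin 2 → V) i, t0) := by
        funext i; fin_cases i <;> simp
      rw [he, trR_sat]
      exact h2

end ForwardFml

end CopyCancel
namespace CopyCancel

open Fml

lemma forward (C D : Set FGraph) (k : ℕ) (hk : 0 < k) (h : SqFOnc C D) :
    SqFOnc ((fun G => FGraph.copy G k) '' C) ((fun G => FGraph.copy G k) '' D) := by
  obtain ⟨T, htk, hsub⟩ := h
  obtain ⟨tk, tkpos, c, I⟩ := T
  have htk' : tk = 1 := htk
  subst htk'
  have t0 : Fin k := ⟨0, hk⟩
  refine ⟨⟨1, one_pos, c + k,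
    ⟨nuF t0 I.ν, Fml.symmetrize (etaRaw t0 I.η),
      fun A u v => Fml.symmetrize_symm A _ u v,
      fun A v => Fml.symmetrize_irrefl A _ v⟩⟩, rfl, ?_⟩
  rintro X ⟨H, hH, rfl⟩
  obtain ⟨G, hG, colorA, ⟨Φ⟩⟩ := hsub hH
  refine ⟨FGraph.copy G k, ⟨G, hG, rfl⟩, ?_⟩
  -- set up the models
  set colO : Fin c → Set G.V := fun a => {v | (v, 0) ∈ colorA a} with hcolO
  set N : CGraph c := AbaseR G.V G.G colO with hN
  set M : CGraph (c + k) := AcopyR G.V G.G colO with hM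
  refine ⟨fun b => {p : (G.V × Fin k) × Fin 1 | p.1 ∈ M.color b}, ⟨?_⟩⟩
  set A : CGraph c := Transduction.copyCGraph ⟨1, tkpos, c, I⟩ G colorA with hA
  set A'' : CGraph (c + k) :=
    Transduction.copyCGraph
      ⟨1, one_pos, c + k,
        ⟨nuF t0 I.ν, Fml.symmetrize (etaRaw t0 I.η),
          fun A u v => Fml.symmetrize_symm A _ u v,
          fun A v => Fml.symmetrize_irrefl A _ v⟩⟩
      (FGraph.copy G k) (fun b => {p : (G.V × Fin k) × Fin 1 | p.1 ∈ M.color b}) with hA''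
  -- transfer along the `Fin 1` collapse
  have satA : ∀ {m : ℕ} (φ : Fml c m) (v : Fin m → G.V × Fin 1),
      Fml.Sat A φ v ↔ Fml.Sat N φ (fun i => (v i).1) := by
    intro m φ v
    refine Fml.sat_equiv A N (dropOne G.V) (fun u v => ?_) (fun a v => ?_) φ v
    · exact copy1_adj G.G u v
    · show v ∈ colorA a ↔ (v.1, 0) ∈ colorA a
      rw [show ((v.1, (0 : Fin 1))) = v from Prod.ext rfl (Subsingleton.elim _ _)]
      exact Iff.rfl
  have satA'' : ∀ {m : ℕ} (φ : Fml (c + k) m) (v : Fin m → (G.V × Fin k) × Fin 1),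
      Fml.Sat A'' φ v ↔ Fml.Sat M φ (fun i => (v i).1) := by
    intro m φ v
    refine Fml.sat_equiv A'' M (dropOne (G.V × Fin k)) (fun u v => ?_) (fun a v => ?_) φ v
    · exact copy1_adj (copyGraph G.G k) u v
    · exact Iff.rfl
  set P : G.V → Prop := fun u => Fml.Sat N I.ν (fun _ => u) with hP
  have hνA : ∀ x : G.V × Fin 1, Fml.Sat A I.ν ![x] ↔ P x.1 := by
    intro x
    refine (satA _ ![x]).trans ?_
    rw [show (fun i => ((![x] : Fin 1 → G.V × Fin 1) i).1) = (fun _ => x.1) from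
      funext fun i => by simp]
  have hηA : ∀ x y : G.V × Fin 1,
      Fml.Sat A I.η ![x, y] ↔ Fml.Sat N I.η ![x.1, y.1] := by
    intro x y
    refine (satA _ ![x, y]).trans ?_
    rw [show (fun i => ((![x, y] : Fin 2 → G.V × Fin 1) i).1) = ![x.1, y.1] from
      funext fun i => by fin_cases i <;> simp]
  have hνA'' : ∀ pp : (G.V × Fin k) × Fin 1,
      Fml.Sat A'' (nuF t0 I.ν) ![pp] ↔ P pp.1.1 := by
    intro pp
    refine (satA'' _ ![pp]).trans ?_
    rw [show (fun i => ((![pp] : Fin 1 → (G.V × Fin k) × Fin 1) i).1) = ![pp.1] from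
      funext fun i => by simp]
    exact sat_nuF G.V G.G colO t0 I.ν pp.1
  have hηN_symm : ∀ u v : G.V, Fml.Sat N I.η ![u, v] → Fml.Sat N I.η ![v, u] :=
    fun u v => I.symm N u v
  have hηA'' : ∀ pp qq : (G.V × Fin k) × Fin 1,
      Fml.Sat A'' (Fml.symmetrize (etaRaw t0 I.η)) ![pp, qq] ↔
        (pp.1 ≠ qq.1 ∧ ((pp.1.1 = qq.1.1 ∧ pp.1.2 ≠ qq.1.2) ∨
          (pp.1.2 = qq.1.2 ∧ Fml.Sat N I.η ![pp.1.1, qq.1.1]))) := by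
    intro pp qq
    refine (satA'' _ ![pp, qq]).trans ?_
    rw [show (fun i => ((![pp, qq] : Fin 2 → (G.V × Fin k) × Fin 1) i).1) = ![pp.1, qq.1]
      from funext fun i => by fin_cases i <;> simp]
    rw [Fml.sat_symmetrize]
    rw [sat_etaRaw G.V G.G colO t0 I.η pp.1 qq.1,
      sat_etaRaw G.V G.G colO t0 I.η qq.1 pp.1]
    constructor
    · rintro ⟨hne, (⟨h1, h2⟩ | ⟨h1, h2⟩) | (⟨h1, h2⟩ | ⟨h1, h2⟩)⟩
      · exact ⟨hne, Or.inl ⟨h1, h2⟩⟩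
      · exact ⟨hne, Or.inr ⟨h1, h2⟩⟩
      · exact ⟨hne, Or.inl ⟨h1.symm, Ne.symm h2⟩⟩
      · exact ⟨hne, Or.inr ⟨h1.symm, hηN_symm _ _ h2⟩⟩
    · rintro ⟨hne, hrest⟩
      exact ⟨hne, Or.inl hrest⟩
  -- the vertex map
  set ΦV : H.V → G.V := fun h => (Φ h).val.1 with hΦVdef
  have hΦV : ∀ h : H.V, P (ΦV h) := by
    intro h
    have := (Φ h).prop
    replace this : Fml.Sat A I.ν (![(Φ h).val] : Fin 1 → G.V × Fin 1) := this
    exact (hνA (Φ h).val).mp this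
  have hΦVinj : Function.Injective ΦV := by
    intro h h' he
    have hval : (Φ h).val = (Φ h').val :=
      Prod.ext he (Subsingleton.elim _ _)
    exact Φ.injective (Subtype.ext hval)
  have hΦVsurj : ∀ u : G.V, P u → ∃ h : H.V, ΦV h = u := by
    intro u hu
    refine ⟨Φ.symm ⟨(u, 0), (hνA (u, 0)).mpr hu⟩, ?_⟩
    show (Φ (Φ.symm ⟨(u, 0), _⟩)).val.1 = u
    rw [Φ.apply_symm_apply]
  have hΦadj : ∀ h h' : H.V, H.G.Adj h h' ↔ Fml.Sat N I.η ![ΦV h, ΦV h'] := by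
    intro h h'
    rw [← Φ.map_rel_iff]
    exact (hηA (Φ h).val (Φ h').val)
  -- construct the isomorphism
  have toθ : ∀ z : H.V × Fin k,
      Fml.Sat A'' (nuF t0 I.ν) ![((ΦV z.1, z.2), 0)] :=
    fun z => (hνA'' ((ΦV z.1, z.2), 0)).mpr (hΦV z.1)
  set toFun : H.V × Fin k →
      {p : (G.V × Fin k) × Fin 1 // Fml.Sat A'' (nuF t0 I.ν) ![p]} :=
    fun z => ⟨((ΦV z.1, z.2), 0), toθ z⟩ with htoFun
  have hbij : Function.Bijective toFun := by
    constructor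
    · intro z z' he
      have h1 : ((ΦV z.1, z.2), (0 : Fin 1)) = ((ΦV z'.1, z'.2), 0) :=
        congrArg Subtype.val he
      have h2 : (ΦV z.1, z.2) = (ΦV z'.1, z'.2) := (Prod.ext_iff.mp h1).1
      have h3 : ΦV z.1 = ΦV z'.1 := (Prod.ext_iff.mp h2).1
      have h4 : z.2 = z'.2 := (Prod.ext_iff.mp h2).2
      exact Prod.ext (hΦVinj h3) h4
    · rintro ⟨⟨⟨u, i⟩, w⟩, hp⟩
      obtain ⟨h, hh⟩ := hΦVsurj u ((hνA'' ((u, i), w)).mp hp)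
      refine ⟨(h, i), Subtype.ext ?_⟩
      show ((ΦV h, i), (0 : Fin 1)) = ((u, i), w)
      exact Prod.ext (Prod.ext hh rfl) (Subsingleton.elim _ _)
  refine ⟨Equiv.ofBijective toFun hbij, ?_⟩
  rintro ⟨h, i⟩ ⟨h', j⟩
  show Fml.Sat A'' (Fml.symmetrize (etaRaw t0 I.η))
      ![((ΦV h, i), 0), ((ΦV h', j), 0)] ↔ (copyGraph H.G k).Adj (h, i) (h', j)
  refine (hηA'' _ _).trans ?_
  show ((ΦV h, i) ≠ (ΦV h', j) ∧ _) ↔ ((h = h' ∧ i ≠ j) ∨ (H.G.Adj h h' ∧ i = j))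
  constructor
  · rintro ⟨hne, (⟨he, hij⟩ | ⟨hij, hη⟩)⟩
    · exact Or.inl ⟨hΦVinj he, hij⟩
    · exact Or.inr ⟨(hΦadj h h').mpr hη, hij⟩
  · rintro (⟨rfl, hij⟩ | ⟨hadj, rfl⟩)
    · refine ⟨fun hEq => hij (Prod.ext_iff.mp hEq).2, Or.inl ⟨rfl, hij⟩⟩
    · refine ⟨fun hEq => ?_, Or.inr ⟨rfl, (hΦadj h h').mp hadj⟩⟩
      exact H.G.ne_of_adj hadj (hΦVinj (Prod.ext_iff.mp hEq).1)

end CopyCancel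
namespace CopyCancel

open Fml

section BackwardFml

variable {c' k : ℕ}

/-- Color embedding for the original colors. -/
def colInl (a : Fin c') : Fin (c' + (k + 1)) := finSumFinEquiv (Sum.inl a)

/-- The color marking copies of index `t`. -/
def hIdxCol (t : Fin k) : Fin (c' + (k + 1)) := finSumFinEquiv (Sum.inr t.castSucc)

/-- The color marking selected representatives. -/
def selCol : Fin (c' + (k + 1)) := finSumFinEquiv (Sum.inr (Fin.last k))

/-- The vertex formula at position `x`. -/
def nuB (ν' : Fml c' 1) {m : ℕ} (x : Fin m) : Fml (c' + (k + 1)) m :=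
  ren ![x] (mapCol colInl ν')

/-- The edge formula at positions `x, y`. -/
def etaB (η' : Fml c' 2) {m : ℕ} (x y : Fin m) : Fml (c' + (k + 1)) m :=
  ren ![x, y] (mapCol colInl η')

/-- "x and y have the same copy-index mark". -/
def hIdxEq {m : ℕ} (x y : Fin m) : Fml (c' + (k + 1)) m :=
  finOr (fun t => fand (.col (hIdxCol t) x) (.col (hIdxCol t) y)) (.eq x x)

/-- "y is in the class of x". -/
def classMem (ν' : Fml c' 1) (η' : Fml c' 2) {m : ℕ} (x y : Fin m) :
    Fml (c' + (k + 1)) m :=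
  fand (nuB ν' y) (.or (.eq x y) (fand (etaB η' x y) (.not (hIdxEq x y))))

/-- The raw edge formula between two representatives. -/
def psiB (ν' : Fml c' 1) (η' : Fml c' 2) : Fml (c' + (k + 1)) 2 :=
  fand (.col selCol 0) (fand (.col selCol 1)
    (.ex (.ex (fand (classMem ν' η' 0 2) (fand (classMem ν' η' 1 3)
      (fand (hIdxEq 2 3) (etaB η' 2 3)))))))

variable (W : Type) [fW : Finite W] (GW : SimpleGraph W) (colP : Fin c' → Set W)
  (hIdxSet : Fin k → Set W) (Rset : Set W)

/-- The enriched colored graph. -/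
abbrev MCmodel : CGraph (c' + (k + 1)) :=
  ⟨W, GW, fun b => Sum.elim colP (fun j => Fin.lastCases Rset hIdxSet j)
    (finSumFinEquiv.symm b)⟩

/-- The colored graph with only the original colors. -/
abbrev ACmodel : CGraph c' := ⟨W, GW, colP⟩

lemma sat_colInl {m : ℕ} (φ : Fml c' m) (v : Fin m → W) :
    (mapCol (colInl (k := k)) φ).Sat (MCmodel W GW colP hIdxSet Rset) v ↔
      φ.Sat (ACmodel W GW colP) v := by
  have h := sat_mapCol (colInl (k := k)) W GW
    (MCmodel W GW colP hIdxSet Rset).color φ v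
  have hcol : (fun a => (MCmodel W GW colP hIdxSet Rset).color (colInl a)) = colP := by
    funext a
    simp only [MCmodel, colInl, Equiv.symm_apply_apply, Sum.elim_inl]
  rw [hcol] at h
  exact h

lemma sat_nuB (ν' : Fml c' 1) {m : ℕ} (x : Fin m) (v : Fin m → W) :
    (nuB (k := k) ν' x).Sat (MCmodel W GW colP hIdxSet Rset) v ↔
      ν'.Sat (ACmodel W GW colP) ![v x] := by
  rw [nuB, sat_ren]
  rw [show (v ∘ ![x]) = ![v x] from funext fun i => by
    simp [Matrix.cons_val_fin_one]]
  exact sat_colInl W GW colP hIdxSet Rset ν' ![v x]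

lemma sat_etaB (η' : Fml c' 2) {m : ℕ} (x y : Fin m) (v : Fin m → W) :
    (etaB (k := k) η' x y).Sat (MCmodel W GW colP hIdxSet Rset) v ↔
      η'.Sat (ACmodel W GW colP) ![v x, v y] := by
  rw [etaB, sat_ren]
  rw [show (v ∘ ![x, y]) = ![v x, v y] from funext fun i => by
    fin_cases i <;> simp]
  exact sat_colInl W GW colP hIdxSet Rset η' ![v x, v y]

lemma sat_hIdxCol (t : Fin k) {m : ℕ} (x : Fin m) (v : Fin m → W) :
    (Fml.col (hIdxCol (c' := c') t) x).Sat (MCmodel W GW colP hIdxSet Rset) v ↔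
      v x ∈ hIdxSet t := by
  show v x ∈ (MCmodel W GW colP hIdxSet Rset).color (hIdxCol t) ↔ _
  simp only [MCmodel, hIdxCol, Equiv.symm_apply_apply, Sum.elim_inr,
    Fin.lastCases_castSucc]

lemma sat_selCol {m : ℕ} (x : Fin m) (v : Fin m → W) :
    (Fml.col (selCol (c' := c') (k := k)) x).Sat (MCmodel W GW colP hIdxSet Rset) v ↔
      v x ∈ Rset := by
  show v x ∈ (MCmodel W GW colP hIdxSet Rset).color selCol ↔ _
  simp only [MCmodel, selCol, Equiv.symm_apply_apply, Sum.elim_inr,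
    Fin.lastCases_last]

lemma sat_hIdxEq {m : ℕ} (x y : Fin m) (v : Fin m → W) :
    (hIdxEq (c' := c') (k := k) x y).Sat (MCmodel W GW colP hIdxSet Rset) v ↔
      ∃ t, v x ∈ hIdxSet t ∧ v y ∈ hIdxSet t := by
  simp only [hIdxEq, sat_finOr, sat_fand, sat_hIdxCol]

end BackwardFml

end CopyCancel
namespace CopyCancel

open Fml

section BackwardSem

variable {c' k : ℕ} (W : Type) [fW : Finite W] (GW : SimpleGraph W)
  (colP : Fin c' → Set W) (H : FGraph) (emb : H.V × Fin k → W) (tsel : H.V → Fin k)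
  (ν' : Fml c' 1) (η' : Fml c' 2)

/-- The set of copies of index `t`. -/
def hIdxSetOf : Fin k → Set W := fun t => {x | ∃ h, emb (h, t) = x}

/-- The set of selected representatives. -/
def RsetOf : Set W := Set.range fun h => emb (h, tsel h)

set_option linter.unusedSectionVars false in
lemma mem_hIdxSetOf (hembInj : Function.Injective emb) (z : H.V × Fin k) (t : Fin k) :
    emb z ∈ hIdxSetOf W H emb t ↔ z.2 = t := by
  constructor
  · rintro ⟨h', he⟩
    have := hembInj he
    rw [← this]
  · intro hz
    exact ⟨z.1, by rw [← hz]⟩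

lemma sat_classMem (hembInj : Function.Injective emb)
    (hE1 : ∀ z, ν'.Sat (ACmodel W GW colP) ![emb z])
    (hE2 : ∀ x, ν'.Sat (ACmodel W GW colP) ![x] → ∃ z, emb z = x)
    (hE3 : ∀ z z', η'.Sat (ACmodel W GW colP) ![emb z, emb z'] ↔ (copyGraph H.G k).Adj z z')
    {m : ℕ} (x y : Fin m) (v : Fin m → W) (h : H.V) (t : Fin k)
    (hx : v x = emb (h, t)) :
    (classMem ν' η' x y).Sat
        (MCmodel W GW colP (hIdxSetOf W H emb) (RsetOf W H emb tsel)) v ↔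
      ∃ t', emb (h, t') = v y := by
  simp only [classMem, sat_fand, sat_nuB, sat_or', sat_eq', sat_etaB, sat_not',
    sat_hIdxEq, hx]
  constructor
  · rintro ⟨hν, hor⟩
    obtain ⟨z', hz'⟩ := hE2 (v y) hν
    rcases hor with heq | ⟨hadj, hnidx⟩
    · exact ⟨t, heq⟩
    · rw [← hz'] at hadj
      rcases (hE3 (h, t) z').mp hadj with ⟨h1, h2⟩ | ⟨h1, h2⟩
      · refine ⟨z'.2, ?_⟩
        have hz2 : ((h, z'.2) : H.V × Fin k) = z' := by
          rw [show h = z'.1 from h1]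
        rw [hz2, hz']
      · exfalso
        apply hnidx
        refine ⟨t, (mem_hIdxSetOf W H emb hembInj (h, t) t).mpr rfl, ?_⟩
        rw [← hz']
        exact (mem_hIdxSetOf W H emb hembInj z' t).mpr h2.symm
  · rintro ⟨t', hy⟩
    refine ⟨by rw [← hy]; exact hE1 (h, t'), ?_⟩
    by_cases htt : t = t'
    · exact Or.inl (by rw [← hy, htt])
    · refine Or.inr ⟨?_, ?_⟩
      · rw [← hy]
        exact (hE3 (h, t) (h, t')).mpr (Or.inl ⟨rfl, htt⟩)
      · rintro ⟨s, hs1, hs2⟩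
        rw [← hy] at hs2
        have h1 : t = s := (mem_hIdxSetOf W H emb hembInj (h, t) s).mp hs1
        have h2 : t' = s := (mem_hIdxSetOf W H emb hembInj (h, t') s).mp hs2
        exact htt (h1.trans h2.symm)

lemma sat_psiB (hembInj : Function.Injective emb)
    (hE1 : ∀ z, ν'.Sat (ACmodel W GW colP) ![emb z])
    (hE2 : ∀ x, ν'.Sat (ACmodel W GW colP) ![x] → ∃ z, emb z = x)
    (hE3 : ∀ z z', η'.Sat (ACmodel W GW colP) ![emb z, emb z'] ↔ (copyGraph H.G k).Adj z z')
    (x y : W) :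
    (psiB ν' η').Sat
        (MCmodel W GW colP (hIdxSetOf W H emb) (RsetOf W H emb tsel)) ![x, y] ↔
      ∃ h h', emb (h, tsel h) = x ∧ emb (h', tsel h') = y ∧ H.G.Adj h h' := by
  simp only [psiB, sat_fand, sat_selCol, sat_ex', Matrix.cons_val_zero,
    Matrix.cons_val_one, Matrix.head_cons]
  constructor
  · rintro ⟨hx, hy, w, w', hc1, hc2, hie, het⟩
    obtain ⟨h, hh⟩ := hx
    obtain ⟨h', hh'⟩ := hy
    set vv : Fin 4 → W := Fin.snoc (Fin.snoc ![x, y] w) w' with hvv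
    have h0 : vv 0 = x := by simp [hvv]
    have h1 : vv 1 = y := by simp [hvv]
    have h2 : vv 2 = w := by simp [hvv]
    have h3 : vv 3 = w' := by simp [hvv]
    have hx0 : vv 0 = emb (h, tsel h) := by rw [h0, ← hh]
    have hy1 : vv 1 = emb (h', tsel h') := by rw [h1, ← hh']
    obtain ⟨t1, ht1⟩ := (sat_classMem W GW colP H emb tsel ν' η' hembInj hE1 hE2 hE3
      0 2 vv h (tsel h) hx0).mp hc1
    obtain ⟨t2, ht2⟩ := (sat_classMem W GW colP H emb tsel ν' η' hembInj hE1 hE2 hE3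
      1 3 vv h' (tsel h') hy1).mp hc2
    rw [sat_hIdxEq] at hie
    obtain ⟨s, hs1, hs2⟩ := hie
    rw [h2] at ht1; rw [h3] at ht2
    rw [h2, ← ht1] at hs1; rw [h3, ← ht2] at hs2
    have hts1 : t1 = s := (mem_hIdxSetOf W H emb hembInj (h, t1) s).mp hs1
    have hts2 : t2 = s := (mem_hIdxSetOf W H emb hembInj (h', t2) s).mp hs2
    rw [sat_etaB] at het
    rw [h2, h3, ← ht1, ← ht2] at het
    rcases (hE3 (h, t1) (h', t2)).mp het with ⟨-, hne⟩ | ⟨hadj, -⟩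
    · exact absurd (hts1.trans hts2.symm) hne
    · exact ⟨h, h', hh, hh', hadj⟩
  · rintro ⟨h, h', hh, hh', hadj⟩
    refine ⟨⟨h, hh⟩, ⟨h', hh'⟩, emb (h, tsel h), emb (h', tsel h), ?_, ?_, ?_, ?_⟩
    · set vv : Fin 4 → W :=
        Fin.snoc (Fin.snoc ![x, y] (emb (h, tsel h))) (emb (h', tsel h)) with hvv
      have hx0 : vv 0 = emb (h, tsel h) := by rw [hvv]; simp; rw [← hh]
      refine (sat_classMem W GW colP H emb tsel ν' η' hembInj hE1 hE2 hE3
        0 2 vv h (tsel h) hx0).mpr ⟨tsel h, ?_⟩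
      simp [hvv]
    · set vv : Fin 4 → W :=
        Fin.snoc (Fin.snoc ![x, y] (emb (h, tsel h))) (emb (h', tsel h)) with hvv
      have hy1 : vv 1 = emb (h', tsel h') := by rw [hvv]; simp; rw [← hh']
      refine (sat_classMem W GW colP H emb tsel ν' η' hembInj hE1 hE2 hE3
        1 3 vv h' (tsel h') hy1).mpr ⟨tsel h, ?_⟩
      simp [hvv]
    · rw [sat_hIdxEq]
      refine ⟨tsel h, ?_, ?_⟩
      · have : (Fin.snoc (Fin.snoc ![x, y] (emb (h, tsel h)))
            (emb (h', tsel h)) : Fin 4 → W) 2 = emb (h, tsel h) := by simp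
        rw [this]
        exact (mem_hIdxSetOf W H emb hembInj (h, tsel h) (tsel h)).mpr rfl
      · have : (Fin.snoc (Fin.snoc ![x, y] (emb (h, tsel h)))
            (emb (h', tsel h)) : Fin 4 → W) 3 = emb (h', tsel h) := by simp
        rw [this]
        exact (mem_hIdxSetOf W H emb hembInj (h', tsel h) (tsel h)).mpr rfl
    · rw [sat_etaB]
      have e2 : (Fin.snoc (Fin.snoc ![x, y] (emb (h, tsel h)))
          (emb (h', tsel h)) : Fin 4 → W) 2 = emb (h, tsel h) := by simp
      have e3 : (Fin.snoc (Fin.snoc ![x, y] (emb (h, tsel h)))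
          (emb (h', tsel h)) : Fin 4 → W) 3 = emb (h', tsel h) := by simp
      rw [e2, e3]
      exact (hE3 (h, tsel h) (h', tsel h)).mpr (Or.inr ⟨hadj, rfl⟩)

end BackwardSem

end CopyCancel
namespace CopyCancel

open Fml

lemma backward (C D : Set FGraph) (k : ℕ) (hk : 0 < k)
    (h : SqFOnc ((fun G => FGraph.copy G k) '' C) ((fun G => FGraph.copy G k) '' D)) :
    SqFOnc C D := by
  classical
  obtain ⟨T', htk, hsub⟩ := h
  obtain ⟨tk, tkpos, c', I'⟩ := T'
  have htk' : tk = 1 := htk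
  subst htk'
  set νfin : Fml ((c' + (k + 1)) * k) 1 :=
    finOr (fun i : Fin k => trC (.col selCol 0) ![i]) (.eq 0 0) with hνfin
  set ηfinRaw : Fml ((c' + (k + 1)) * k) 2 :=
    finOr (fun i : Fin k =>
      finOr (fun j : Fin k => trC (psiB I'.ν I'.η) ![i, j]) (.eq 0 0)) (.eq 0 0) with hηfinRaw
  refine ⟨⟨1, one_pos, (c' + (k + 1)) * k,
    ⟨νfin, Fml.symmetrize ηfinRaw,
      fun A u v => Fml.symmetrize_symm A _ u v,
      fun A v => Fml.symmetrize_irrefl A _ v⟩⟩, rfl, ?_⟩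
  intro H hH
  obtain ⟨GD, hGD, hmem⟩ := hsub ⟨H, hH, rfl⟩
  obtain ⟨G, hG, rfl⟩ := hGD
  obtain ⟨color', ⟨Φ⟩⟩ := hmem
  refine ⟨G, hG, ?_⟩
  -- models
  set W : Type := G.V × Fin k with hW
  set GW : SimpleGraph W := copyGraph G.G k with hGW
  set colP : Fin c' → Set W := fun a => {x | (x, 0) ∈ color' a} with hcolP
  set A' : CGraph c' :=
    Transduction.copyCGraph ⟨1, tkpos, c', I'⟩ (FGraph.copy G k) color' with hA'
  have satA' : ∀ {m : ℕ} (φ : Fml c' m) (v : Fin m → W × Fin 1),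
      Fml.Sat A' φ v ↔ Fml.Sat (ACmodel W GW colP) φ (fun i => (v i).1) := by
    intro m φ v
    refine Fml.sat_equiv A' (ACmodel W GW colP) (dropOne W) (fun u v => ?_) (fun a v => ?_) φ v
    · exact copy1_adj (copyGraph G.G k) u v
    · show v ∈ color' a ↔ (v.1, 0) ∈ color' a
      rw [show ((v.1, (0 : Fin 1))) = v from Prod.ext rfl (Subsingleton.elim _ _)]
      exact Iff.rfl
  have hν1 : ∀ x : W × Fin 1,
      Fml.Sat A' I'.ν ![x] ↔ Fml.Sat (ACmodel W GW colP) I'.ν ![x.1] := by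
    intro x
    refine (satA' _ ![x]).trans ?_
    rw [show (fun i => ((![x] : Fin 1 → W × Fin 1) i).1) = ![x.1] from
      funext fun i => by simp]
  have hη1 : ∀ x y : W × Fin 1,
      Fml.Sat A' I'.η ![x, y] ↔ Fml.Sat (ACmodel W GW colP) I'.η ![x.1, y.1] := by
    intro x y
    refine (satA' _ ![x, y]).trans ?_
    rw [show (fun i => ((![x, y] : Fin 2 → W × Fin 1) i).1) = ![x.1, y.1] from
      funext fun i => by fin_cases i <;> simp]
  -- the embedding of the copies of H
  set emb : H.V × Fin k → W := fun z => (Φ z).val.1 with hemb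
  have hE1 : ∀ z, Fml.Sat (ACmodel W GW colP) I'.ν ![emb z] := by
    intro z
    exact (hν1 (Φ z).val).mp (Φ z).prop
  have hembInj : Function.Injective emb := by
    intro z z' he
    have hval : (Φ z).val = (Φ z').val := Prod.ext he (Subsingleton.elim _ _)
    exact Φ.injective (Subtype.ext hval)
  have hE2 : ∀ x, Fml.Sat (ACmodel W GW colP) I'.ν ![x] → ∃ z, emb z = x := by
    intro x hx
    refine ⟨Φ.symm ⟨(x, 0), (hν1 (x, 0)).mpr hx⟩, ?_⟩
    show (Φ (Φ.symm ⟨(x, 0), _⟩)).val.1 = x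
    rw [Φ.apply_symm_apply]
  have hE3 : ∀ z z', Fml.Sat (ACmodel W GW colP) I'.η ![emb z, emb z'] ↔
      (copyGraph H.G k).Adj z z' := by
    intro z z'
    rw [← hη1 (Φ z).val (Φ z').val]
    exact Φ.map_rel_iff
  -- Hall's theorem: a system of distinct representatives
  have := Fintype.ofFinite H.V
  have := Fintype.ofFinite G.V
  set tproj : H.V → Finset G.V :=
    fun h => Finset.image (fun t => (emb (h, t)).1) Finset.univ with htproj
  have hHall : ∀ s : Finset H.V, s.card ≤ (s.biUnion tproj).card := by
    intro s
    have hsub2 : (s ×ˢ (Finset.univ : Finset (Fin k))).image emb ⊆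
        (s.biUnion tproj) ×ˢ (Finset.univ : Finset (Fin k)) := by
      intro x hx
      obtain ⟨⟨h, t⟩, hz, rfl⟩ := Finset.mem_image.mp hx
      rw [Finset.mem_product] at hz ⊢
      refine ⟨Finset.mem_biUnion.mpr ⟨h, hz.1, ?_⟩, Finset.mem_univ _⟩
      exact Finset.mem_image.mpr ⟨t, Finset.mem_univ _, rfl⟩
    have h1 : s.card * k = ((s ×ˢ (Finset.univ : Finset (Fin k))).image emb).card := by
      rw [Finset.card_image_of_injective _ hembInj, Finset.card_product,
        Finset.card_univ, Fintype.card_fin]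
    have h2 : ((s.biUnion tproj) ×ˢ (Finset.univ : Finset (Fin k))).card =
        (s.biUnion tproj).card * k := by
      rw [Finset.card_product, Finset.card_univ, Fintype.card_fin]
    have h3 := Finset.card_le_card hsub2
    rw [← h1, h2] at h3
    exact Nat.le_of_mul_le_mul_right h3 hk
  obtain ⟨f, hfInj, hfMem⟩ :=
    (Finset.all_card_le_biUnion_card_iff_exists_injective tproj).mp hHall
  have hfsel : ∀ h : H.V, ∃ t : Fin k, (emb (h, t)).1 = f h := by
    intro h
    obtain ⟨t, -, ht⟩ := Finset.mem_image.mp (hfMem h)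
    exact ⟨t, ht⟩
  set tsel : H.V → Fin k := fun h => Classical.choose (hfsel h) with htsel
  have htselSpec : ∀ h : H.V, (emb (h, tsel h)).1 = f h :=
    fun h => Classical.choose_spec (hfsel h)
  set MC : CGraph (c' + (k + 1)) :=
    MCmodel W GW colP (hIdxSetOf W H emb) (RsetOf W H emb tsel) with hMC
  -- the two key translations
  have key1 : ∀ (g : G.V) (i : Fin k),
      Fml.Sat (Abase G.V G.G MC.color) (trC (.col selCol 0) ![i]) ![g] ↔
        ∃ h : H.V, emb (h, tsel h) = (g, i) := by
    intro g i
    refine (trC_sat G.V G.G MC.color (.col selCol 0) ![i] ![g]).trans ?_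
    have hval : (fun z => ((![g] : Fin 1 → G.V) z, (![i] : Fin 1 → Fin k) z)) =
        ![((g, i) : W)] := funext fun z => by simp
    rw [hval]
    refine (sat_selCol W GW colP (hIdxSetOf W H emb) (RsetOf W H emb tsel) 0 _).trans ?_
    simp [RsetOf]
  have key2 : ∀ (g g' : G.V) (i j : Fin k),
      Fml.Sat (Abase G.V G.G MC.color) (trC (psiB I'.ν I'.η) ![i, j]) ![g, g'] ↔
        ∃ h h', emb (h, tsel h) = (g, i) ∧ emb (h', tsel h') = (g', j) ∧
          H.G.Adj h h' := by
    intro g g' i j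
    refine (trC_sat G.V G.G MC.color (psiB I'.ν I'.η) ![i, j] ![g, g']).trans ?_
    have hval : (fun z => ((![g, g'] : Fin 2 → G.V) z, (![i, j] : Fin 2 → Fin k) z)) =
        ![((g, i) : W), (g', j)] := funext fun z => by fin_cases z <;> simp
    rw [hval]
    exact sat_psiB W GW colP H emb tsel I'.ν I'.η hembInj hE1 hE2 hE3 (g, i) (g', j)
  -- the final colored graph on G
  refine ⟨fun b => {p : G.V × Fin 1 | p.1 ∈ (Abase G.V G.G MC.color).color b}, ⟨?_⟩⟩
  set A'' : CGraph ((c' + (k + 1)) * k) :=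
    Transduction.copyCGraph
      ⟨1, one_pos, (c' + (k + 1)) * k,
        ⟨νfin, Fml.symmetrize ηfinRaw,
          fun A u v => Fml.symmetrize_symm A _ u v,
          fun A v => Fml.symmetrize_irrefl A _ v⟩⟩ G
      (fun b => {p : G.V × Fin 1 | p.1 ∈ (Abase G.V G.G MC.color).color b}) with hA''
  have satA'' : ∀ {m : ℕ} (φ : Fml ((c' + (k + 1)) * k) m) (v : Fin m → G.V × Fin 1),
      Fml.Sat A'' φ v ↔ Fml.Sat (Abase G.V G.G MC.color) φ (fun i => (v i).1) := by
    intro m φ v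
    refine Fml.sat_equiv A'' (Abase G.V G.G MC.color) (dropOne G.V)
      (fun u v => ?_) (fun a v => ?_) φ v
    · exact copy1_adj G.G u v
    · exact Iff.rfl
  have hν'' : ∀ p : G.V × Fin 1, Fml.Sat A'' νfin ![p] ↔ ∃ h, f h = p.1 := by
    intro p
    refine (satA'' _ ![p]).trans ?_
    rw [show (fun i => ((![p] : Fin 1 → G.V × Fin 1) i).1) = ![p.1] from
      funext fun i => by simp]
    rw [hνfin, sat_finOr]
    constructor
    · rintro ⟨i, hi⟩
      obtain ⟨h, hh⟩ := (key1 p.1 i).mp hi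
      exact ⟨h, by rw [← htselSpec h, hh]⟩
    · rintro ⟨h, hh⟩
      refine ⟨(emb (h, tsel h)).2, (key1 p.1 _).mpr ⟨h, ?_⟩⟩
      exact Prod.ext (by rw [htselSpec h, hh]) rfl
  set Rraw : G.V → G.V → Prop :=
    fun g g' => ∃ h h', f h = g ∧ f h' = g' ∧ H.G.Adj h h' with hRraw
  have hraw : ∀ p q : G.V × Fin 1,
      Fml.Sat (Abase G.V G.G MC.color) ηfinRaw ![p.1, q.1] ↔ Rraw p.1 q.1 := by
    intro p q
    rw [hηfinRaw, sat_finOr]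
    constructor
    · rintro ⟨i, hi⟩
      rw [sat_finOr] at hi
      obtain ⟨j, hj⟩ := hi
      obtain ⟨h, h', hh, hh', hadj⟩ := (key2 p.1 q.1 i j).mp hj
      exact ⟨h, h', by rw [← htselSpec h, hh], by rw [← htselSpec h', hh'], hadj⟩
    · rintro ⟨h, h', hh, hh', hadj⟩
      refine ⟨(emb (h, tsel h)).2, ?_⟩
      rw [sat_finOr]
      refine ⟨(emb (h', tsel h')).2, (key2 p.1 q.1 _ _).mpr ⟨h, h', ?_, ?_, hadj⟩⟩
      · exact Prod.ext (by rw [htselSpec h, hh]) rfl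
      · exact Prod.ext (by rw [htselSpec h', hh']) rfl
  have hη'' : ∀ p q : G.V × Fin 1,
      Fml.Sat A'' (Fml.symmetrize ηfinRaw) ![p, q] ↔
        (p.1 ≠ q.1 ∧ (Rraw p.1 q.1 ∨ Rraw q.1 p.1)) := by
    intro p q
    refine (satA'' _ ![p, q]).trans ?_
    rw [show (fun i => ((![p, q] : Fin 2 → G.V × Fin 1) i).1) = ![p.1, q.1] from
      funext fun i => by fin_cases i <;> simp]
    have hs := Fml.sat_symmetrize (Abase G.V G.G MC.color) ηfinRaw p.1 q.1
    rw [show (![p.1, q.1] : Fin 2 → G.V) = ![p.1, q.1] from rfl] at hs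
    rw [hs, hraw p q]
    constructor
    · rintro ⟨hne, hor⟩
      refine ⟨hne, ?_⟩
      rcases hor with h1 | h1
      · exact Or.inl h1
      · right
        have := (hraw q p).mp ?_
        · exact this
        · exact h1
    · rintro ⟨hne, hor⟩
      refine ⟨hne, ?_⟩
      rcases hor with h1 | h1
      · exact Or.inl h1
      · exact Or.inr ((hraw q p).mpr h1)
  -- the isomorphism
  have toθ : ∀ h : H.V, Fml.Sat A'' νfin ![((f h, 0) : G.V × Fin 1)] :=
    fun h => (hν'' (f h, 0)).mpr ⟨h, rfl⟩
  set toFun : H.V → {p : G.V × Fin 1 // Fml.Sat A'' νfin ![p]} :=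
    fun h => ⟨(f h, 0), toθ h⟩ with htoFun
  have hbij : Function.Bijective toFun := by
    constructor
    · intro h h' he
      have h1 : ((f h, 0) : G.V × Fin 1) = (f h', 0) := congrArg Subtype.val he
      exact hfInj (Prod.ext_iff.mp h1).1
    · rintro ⟨⟨g, w⟩, hp⟩
      obtain ⟨h, hh⟩ := (hν'' (g, w)).mp hp
      exact ⟨h, Subtype.ext (Prod.ext hh (Subsingleton.elim _ _))⟩
  refine ⟨Equiv.ofBijective toFun hbij, ?_⟩
  intro h h'
  show Fml.Sat A'' (Fml.symmetrize ηfinRaw) ![((f h, 0) : G.V × Fin 1), (f h', 0)] ↔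
    H.G.Adj h h'
  rw [hη'' (f h, 0) (f h', 0)]
  constructor
  · rintro ⟨hne, hor⟩
    rcases hor with ⟨h1, h2, e1, e2, hadj⟩ | ⟨h1, h2, e1, e2, hadj⟩
    · rwa [hfInj e1, hfInj e2] at hadj
    · rw [hfInj e1, hfInj e2] at hadj
      exact hadj.symm
  · intro hadj
    refine ⟨fun he => ?_, Or.inl ⟨h, h', rfl, rfl, hadj⟩⟩
    exact H.G.ne_of_adj hadj (hfInj he)

end CopyCancel
theorem copy_cancellation (C D : Set FGraph) (hC : IsoClosed C) (hD : IsoClosed D)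
    (k : ℕ) (hk : 0 < k) :
    SqFOnc C D ↔
      SqFOnc ((fun G => FGraph.copy G k) '' C) ((fun G => FGraph.copy G k) '' D) := by
  exact ⟨fun h => CopyCancel.forward C D k hk h, fun h => CopyCancel.backward C D k hk h⟩
end

section
/- Let 𝒞 and 𝒟 be classes of graphs. If 𝒞 is weakly sparse, 𝒟 is weakly sparse and hereditary, and 𝒞 ⊆ P(𝒟) for some perturbation P, then 𝒞 is nearly 𝒟. -/
open SimpleGraph

/-! ### Auxiliary lemmas -/

open scoped Classical in
/-- Extract an injective enumeration from a finset of card `t`. -/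
lemma enum_of_card {V : Type} {s : Finset V} {t : ℕ} (h : s.card = t) :
    ∃ a : Fin t → V, Function.Injective a ∧ ∀ i, a i ∈ s := by
  subst h
  exact ⟨fun i => (s.equivFin.symm i : V),
    fun i j hij => s.equivFin.symm.injective (Subtype.ext hij),
    fun i => (s.equivFin.symm i).2⟩

/-- Bipartite Ramsey by pigeonhole. -/
lemma bipRamsey {V : Type} (t : ℕ) (X Y : Finset V)
    (hX : 2 * t ≤ X.card) (hY : 2 ^ (2 * t) * t ≤ Y.card)
    (r : V → V → Prop) :
    ∃ a b : Fin t → V, Function.Injective a ∧ Function.Injective b ∧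
      (∀ i, a i ∈ X) ∧ (∀ i, b i ∈ Y) ∧
      ((∀ i j, r (a i) (b j)) ∨ (∀ i j, ¬ r (a i) (b j))) := by
  classical
  obtain ⟨X', hX'sub, hX'card⟩ := Finset.exists_subset_card_eq hX
  have hmaps : ∀ y ∈ Y, (X'.filter fun x => r x y) ∈ X'.powerset :=
    fun y _ => Finset.mem_powerset.2 (Finset.filter_subset _ _)
  obtain ⟨S, hS, hfiber⟩ := Finset.exists_le_card_fiber_of_mul_le_card_of_maps_to hmaps
    (Finset.powerset_nonempty X') (by rw [Finset.card_powerset, hX'card]; exact hY)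
  have hSsub : S ⊆ X' := Finset.mem_powerset.mp hS
  set Y' := Y.filter fun y => (X'.filter fun x => r x y) = S with hY'
  obtain ⟨Yt, hYtsub, hYtcard⟩ := Finset.exists_subset_card_eq hfiber
  obtain ⟨b, hbinj, hbmem⟩ := enum_of_card hYtcard
  have hbY' : ∀ j, b j ∈ Y' := fun j => hYtsub (hbmem j)
  have hbfib : ∀ j, (X'.filter fun x => r x (b j)) = S :=
    fun j => (Finset.mem_filter.mp (hbY' j)).2
  have hbY : ∀ j, b j ∈ Y := fun j => (Finset.mem_filter.mp (hbY' j)).1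
  have hScard : S.card ≤ 2 * t := hX'card ▸ Finset.card_le_card hSsub
  have hcards : S.card + (X' \ S).card = 2 * t := by
    rw [Finset.card_sdiff_of_subset hSsub, hX'card]; omega
  by_cases hbig : t ≤ S.card
  · obtain ⟨T, hTsub, hTcard⟩ := Finset.exists_subset_card_eq hbig
    obtain ⟨a, hainj, hamem⟩ := enum_of_card hTcard
    refine ⟨a, b, hainj, hbinj, fun i => hX'sub (hSsub (hTsub (hamem i))), hbY, Or.inl ?_⟩
    intro i j
    have : a i ∈ X'.filter fun x => r x (b j) := by rw [hbfib j]; exact hTsub (hamem i)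
    exact (Finset.mem_filter.mp this).2
  · have hbig' : t ≤ (X' \ S).card := by omega
    obtain ⟨T, hTsub, hTcard⟩ := Finset.exists_subset_card_eq hbig'
    obtain ⟨a, hainj, hamem⟩ := enum_of_card hTcard
    refine ⟨a, b, hainj, hbinj,
      fun i => hX'sub (Finset.mem_sdiff.mp (hTsub (hamem i))).1, hbY, Or.inr ?_⟩
    intro i j hr
    have hmem : a i ∈ X'.filter fun x => r x (b j) :=
      Finset.mem_filter.2 ⟨(Finset.mem_sdiff.mp (hTsub (hamem i))).1, hr⟩
    rw [hbfib j] at hmem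
    exact (Finset.mem_sdiff.mp (hTsub (hamem i))).2 hmem

lemma hasKtt_mono {V : Type} {G : SimpleGraph V} {s t : ℕ} (h : s ≤ t) :
    HasKtt G t → HasKtt G s := by
  rintro ⟨a, b, ha, hb, hne, hadj⟩
  exact ⟨a ∘ Fin.castLE h, b ∘ Fin.castLE h, ha.comp (Fin.castLE_injective h),
    hb.comp (Fin.castLE_injective h), fun i j => hne _ _, fun i j => hadj _ _⟩

lemma hasKtt_of_map {V W : Type} {G : SimpleGraph V} {H : SimpleGraph W}
    {f : V → W} (hf : Function.Injective f)
    (hadj : ∀ u v, G.Adj u v → H.Adj (f u) (f v)) {t : ℕ} :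
    HasKtt G t → HasKtt H t := by
  rintro ⟨a, b, ha, hb, hne, hab⟩
  exact ⟨f ∘ a, f ∘ b, hf.comp ha, hf.comp hb,
    fun i j h => hne i j (hf h), fun i j => hadj _ _ (hab i j)⟩

open scoped Classical in
lemma perturb_adj {V : Type} {p : ℕ} (Z : Fin p → Set V) (G : SimpleGraph V) (u v : V) :
    (perturbGraph (List.ofFn Z) G).Adj u v ↔
      u ≠ v ∧ (G.Adj u v ↔
        Even (Finset.univ.filter fun i => u ∈ Z i ∧ v ∈ Z i).card) := by
  induction p generalizing G with
  | zero =>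
    simp only [List.ofFn_zero, perturbGraph]
    constructor
    · intro h; exact ⟨h.ne, iff_of_true h (by simp)⟩
    · rintro ⟨hne, h⟩
      exact h.mpr (by simp)
  | succ p ih =>
    rw [List.ofFn_succ]
    show (perturbGraph _ (scompGraph G (Z 0))).Adj u v ↔ _
    rw [ih (fun i => Z i.succ) (scompGraph G (Z 0))]
    have hcard : (Finset.univ.filter fun i : Fin (p+1) => u ∈ Z i ∧ v ∈ Z i).card =
        (if u ∈ Z 0 ∧ v ∈ Z 0 then 1 else 0) +
        (Finset.univ.filter fun i : Fin p => u ∈ Z i.succ ∧ v ∈ Z i.succ).card := by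
      rw [Finset.card_filter, Finset.card_filter, Fin.sum_univ_succ]
    rw [hcard]
    have hscomp : ∀ x y : V, (scompGraph G (Z 0)).Adj x y ↔
        (x ≠ y ∧ (G.Adj x y ↔ ¬(x ∈ Z 0 ∧ y ∈ Z 0))) := fun x y => Iff.rfl
    rw [hscomp]
    set n := (Finset.univ.filter fun i : Fin p => u ∈ Z i.succ ∧ v ∈ Z i.succ).card
    by_cases hb : u ∈ Z 0 ∧ v ∈ Z 0
    · have h1 : Even ((if u ∈ Z 0 ∧ v ∈ Z 0 then 1 else 0) + n) ↔ ¬ Even n := by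
        rw [if_pos hb, Nat.add_comm, Nat.even_add_one]
      rw [h1]
      constructor <;> rintro ⟨hne, h⟩ <;> exact ⟨hne, by tauto⟩
    · have h1 : (if u ∈ Z 0 ∧ v ∈ Z 0 then 1 else 0) + n = n := by
        rw [if_neg hb, Nat.zero_add]
      rw [h1]
      constructor <;> rintro ⟨hne, h⟩ <;> exact ⟨hne, by tauto⟩

/-! ### The statement -/

theorem weakly_sparse_perturbation_nearly (C D : Set FGraph)
    (hC : WeaklySparse C) (hD : WeaklySparse D) (hher : HereditaryClass D)
    (hP : IsPerturbationOfClass C D) :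
    Nearly C D := by
  classical
  obtain ⟨tC, htC⟩ := hC
  obtain ⟨tD, htD⟩ := hD
  obtain ⟨p, hp⟩ := hP
  set t := max tC tD with ht
  set N := 2 ^ (2 * t) * t + 2 * t with hN
  refine ⟨2 ^ p * N, ?_⟩
  intro G hG
  obtain ⟨G₀, hG₀D, Zs, ⟨e⟩⟩ := hp hG
  haveI : Fintype G₀.V := Fintype.ofFinite _
  set K : G₀.V → Finset (Fin p) := fun v => Finset.univ.filter (fun i => v ∈ Zs i) with hKdef
  have cnt : ∀ u v : G₀.V,
      (Finset.univ.filter fun i => u ∈ Zs i ∧ v ∈ Zs i).card = (K u ∩ K v).card := by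
    intro u v
    congr 1
    ext i
    simp [hKdef, Finset.mem_filter, Finset.mem_inter]
  set G' := perturbGraph (List.ofFn Zs) G₀.G with hG'
  have adj' : ∀ u v : G₀.V, G'.Adj u v ↔
      u ≠ v ∧ (G₀.G.Adj u v ↔ Even (K u ∩ K v).card) := by
    intro u v
    rw [hG', perturb_adj, cnt]
  set cell : Finset (Fin p) → Finset G₀.V :=
    fun b => Finset.univ.filter (fun v => K v = b) with hcell
  set Big : G₀.V → Prop := fun v => N ≤ (cell (K v)).card with hBig
  -- key: no flip between big cells
  have key : ∀ u v : G₀.V, Big u → Big v → Even (K u ∩ K v).card := by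
    intro u v hu hv
    by_contra hodd
    have hsets : ∃ X1 X2 : Finset G₀.V, Disjoint X1 X2 ∧ 2 * t ≤ X1.card ∧
        2 ^ (2 * t) * t ≤ X2.card ∧ (∀ x ∈ X1, K x = K u) ∧ (∀ x ∈ X2, K x = K v) := by
      by_cases hKuv : K u = K v
      · obtain ⟨X1, hX1sub, hX1card⟩ :=
          Finset.exists_subset_card_eq (s := cell (K u)) (n := 2 * t) (by omega)
        refine ⟨X1, cell (K u) \ X1, Finset.disjoint_sdiff, by omega, ?_, ?_, ?_⟩
        · rw [Finset.card_sdiff_of_subset hX1sub]; omega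
        · intro x hx; exact (Finset.mem_filter.mp (hX1sub hx)).2
        · intro x hx
          rw [← hKuv]
          exact (Finset.mem_filter.mp (Finset.mem_sdiff.mp hx).1).2
      · refine ⟨cell (K u), cell (K v), ?_, by omega, by omega,
          fun x hx => (Finset.mem_filter.mp hx).2, fun x hx => (Finset.mem_filter.mp hx).2⟩
        rw [Finset.disjoint_left]
        intro x hxu hxv
        exact hKuv (((Finset.mem_filter.mp hxu).2).symm.trans (Finset.mem_filter.mp hxv).2)
    obtain ⟨X1, X2, hdisj, h1, h2, hK1, hK2⟩ := hsets
    obtain ⟨a, b, ha, hb, haX, hbX, hor⟩ := bipRamsey t X1 X2 h1 h2 G₀.G.Adj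
    have hne : ∀ i j, a i ≠ b j := by
      intro i j h
      exact Finset.disjoint_left.mp hdisj (haX i) (h ▸ hbX j)
    have hKab : ∀ i j, (K (a i) ∩ K (b j)).card = (K u ∩ K v).card := by
      intro i j
      rw [hK1 _ (haX i), hK2 _ (hbX j)]
    rcases hor with hall | hnone
    · have hktt : HasKtt G₀.G t := ⟨a, b, ha, hb, hne, hall⟩
      exact htD G₀ hG₀D (hasKtt_mono (le_max_right tC tD) hktt)
    · have hktt : HasKtt G' t := by
        refine ⟨a, b, ha, hb, hne, fun i j => ?_⟩
        rw [adj']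
        refine ⟨hne i j, ?_⟩
        rw [hKab i j]
        exact iff_of_false (hnone i j) hodd
      have hkttG : HasKtt G.G t :=
        hasKtt_of_map (f := fun x => e.symm x) e.symm.toEquiv.injective
          (fun x y hxy => e.symm.map_adj_iff.mpr hxy) hktt
      exact htC G hG (hasKtt_mono (le_max_left tC tD) hkttG)
  -- the near-structure
  set S : Set G₀.V := {v | Big v} with hS
  set B : Finset G₀.V := Finset.univ.filter (fun v => ¬ Big v) with hB
  refine ⟨⟨↥S, G₀.G.induce S⟩, hher G₀ hG₀D _ ⟨Subtype.val, Subtype.val_injective,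
    fun u v => Iff.rfl⟩, ?_⟩
  refine ⟨fun x => e.symm x.1, ?_, ?_, ?_⟩
  · intro x y hxy
    exact Subtype.ext (e.symm.toEquiv.injective hxy)
  · intro x y
    show G₀.G.Adj x.1 y.1 ↔ G.G.Adj (e.symm x.1) (e.symm y.1)
    rw [e.symm.map_adj_iff, adj']
    constructor
    · intro h
      exact ⟨fun hxy => G₀.G.loopless.irrefl x.1 (hxy ▸ h), iff_of_true h (key _ _ x.2 y.2)⟩
    · rintro ⟨hne, h⟩
      exact h.mpr (key _ _ x.2 y.2)
  · -- cardinality bound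
    have hinj : ∃ g : {v : G.V // v ∉ Set.range fun x : ↥S => e.symm x.1} → {v : G₀.V // v ∈ B},
        Function.Injective g := by
      refine ⟨fun v => ⟨e v.1, ?_⟩, ?_⟩
      · rw [hB, Finset.mem_filter]
        refine ⟨Finset.mem_univ _, fun hbig => ?_⟩
        exact v.2 ⟨⟨e v.1, hbig⟩, e.toEquiv.symm_apply_apply v.1⟩
      · intro x y hxy
        have h' : e x.1 = e y.1 := congrArg Subtype.val hxy
        exact Subtype.ext (e.toEquiv.injective h')
    obtain ⟨g, hg⟩ := hinj
    have h1 : Nat.card {v : G.V // v ∉ Set.range fun x : ↥S => e.symm x.1} ≤ Nat.card {v : G₀.V // v ∈ B} :=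
      Nat.card_le_card_of_injective g hg
    have h2 : Nat.card {v : G₀.V // v ∈ B} = B.card := Nat.card_eq_finsetCard B
    have h3 : B.card ≤ 2 ^ p * N := by
      have hfib := Finset.card_eq_sum_card_fiberwise
        (f := K) (s := B) (t := (Finset.univ : Finset (Finset (Fin p))))
        (fun x _ => Finset.mem_univ _)
      rw [hfib]
      calc ∑ b ∈ (Finset.univ : Finset (Finset (Fin p))), (B.filter fun v => K v = b).card
          ≤ (Finset.univ : Finset (Finset (Fin p))).card * N := by
            rw [← smul_eq_mul]
            refine Finset.sum_le_card_nsmul _ _ N ?_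
            intro b _
            by_cases hne : (B.filter fun v => K v = b).Nonempty
            · obtain ⟨w, hw⟩ := hne
              have hwB := Finset.mem_filter.mp hw
              have hwK : K w = b := hwB.2
              have hsmall : ¬ Big w := (Finset.mem_filter.mp hwB.1).2
              have hlt : (cell b).card < N := by
                rw [← hwK]
                exact lt_of_not_ge hsmall
              have hsub : (B.filter fun v => K v = b) ⊆ cell b := by
                intro x hx
                rw [hcell, Finset.mem_filter]
                exact ⟨Finset.mem_univ _, (Finset.mem_filter.mp hx).2⟩
              exact le_of_lt (lt_of_le_of_lt (Finset.card_le_card hsub) hlt)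
            · rw [Finset.not_nonempty_iff_eq_empty.mp hne]
              simp
        _ = 2 ^ p * N := by
            rw [Finset.card_univ, Fintype.card_finset, Fintype.card_fin]
    exact h1.trans (h2.trans_le h3)
end

section
/- Up to transduction equivalence, the class of all finite graphs is the only class that is an upper bound in ⊑_FO for all classes of bounded expansion: if ℬ is a class of graphs such that every class of bounded expansion is a first-order transduction of ℬ, then the class of all finite graphs is a first-order transduction of ℬ. -/
open SimpleGraph

/-! ### Auxiliary: formula machinery -/

namespace Fml

variable {c c' : ℕ}

/-- Conjunction. -/
def and {m : ℕ} (φ ψ : Fml c m) : Fml c m := .not ((Fml.not φ).or (.not ψ))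

lemma sat_and {A : CGraph c} {m : ℕ} {φ ψ : Fml c m} {v : Fin m → A.V} :
    Sat A (φ.and ψ) v ↔ Sat A φ v ∧ Sat A ψ v := by
  simp [Fml.and, Sat]

/-- Renaming of free variables. -/
def rename : {m m' : ℕ} → Fml c m → (Fin m → Fin m') → Fml c m'
  | _, _, .eq i j, f => .eq (f i) (f j)
  | _, _, .adj i j, f => .adj (f i) (f j)
  | _, _, .col i x, f => .col i (f x)
  | _, _, .not φ, f => .not (φ.rename f)
  | _, _, .or φ ψ, f => .or (φ.rename f) (ψ.rename f)
  | _, _, .ex φ, f => .ex (φ.rename (Fin.snoc (fun j => (f j).castSucc) (Fin.last _)))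

lemma sat_rename {A : CGraph c} : ∀ {m m' : ℕ} (φ : Fml c m) (f : Fin m → Fin m')
    (v : Fin m' → A.V), Sat A (φ.rename f) v ↔ Sat A φ (v ∘ f)
  | _, _, .eq i j, f, v => Iff.rfl
  | _, _, .adj i j, f, v => Iff.rfl
  | _, _, .col i x, f, v => Iff.rfl
  | _, _, .not φ, f, v => by simp only [rename, Sat, sat_rename φ f v]
  | _, _, .or φ ψ, f, v => by
      simp only [rename, Sat, sat_rename φ f v, sat_rename ψ f v]
  | _, _, .ex φ, f, v => by
      simp only [rename, Sat]
      refine exists_congr fun w => ?_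
      rw [sat_rename φ _ (Fin.snoc v w)]
      have : (Fin.snoc v w ∘ Fin.snoc (fun j => (f j).castSucc) (Fin.last _)) =
          Fin.snoc (v ∘ f) w := by
        funext i
        refine Fin.lastCases ?_ (fun j => ?_) i
        · simp [Fin.snoc_last]
        · simp [Fin.snoc_castSucc]
      rw [this]

/-- Recoloring (renaming of the unary predicates). -/
def recolor (g : Fin c → Fin c') : {m : ℕ} → Fml c m → Fml c' m
  | _, .eq i j => .eq i j
  | _, .adj i j => .adj i j
  | _, .col i x => .col (g i) x
  | _, .not φ => .not (φ.recolor g)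
  | _, .or φ ψ => .or (φ.recolor g) (ψ.recolor g)
  | _, .ex φ => .ex (φ.recolor g)

end Fml

/-- The colored graph obtained by pulling back colors along `g`. -/
def CGraph.recolorS (A : CGraph c') (g : Fin c → Fin c') : CGraph c :=
  { V := A.V, G := A.G, color := A.color ∘ g }

lemma Fml.sat_recolor {c c' : ℕ} {A : CGraph c'} (g : Fin c → Fin c') :
    ∀ {m : ℕ} (φ : Fml c m) (v : Fin m → A.V),
      Sat A (φ.recolor g) v ↔ Sat (A.recolorS g) φ v
  | _, .eq i j, v => Iff.rfl
  | _, .adj i j, v => Iff.rfl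
  | _, .col i x, v => Iff.rfl
  | _, .not φ, v => by simp only [recolor, Sat, sat_recolor g φ v]
  | _, .or φ ψ, v => by simp only [recolor, Sat, sat_recolor g φ v, sat_recolor g ψ v]
  | _, .ex φ, v => by
      simp only [recolor, Sat]
      exact exists_congr fun w => sat_recolor g φ (Fin.snoc v w)

/-! ### Abstract chains -/

/-- `chainRel E P n u v` : there is a sequence `u, z₁, …, zₙ, v` of consecutive
`E`-related elements whose interior elements satisfy `P`. -/
def chainRel {α : Type*} (E : α → α → Prop) (P : α → Prop) : ℕ → α → α → Prop
  | 0, u, v => E u v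
  | n + 1, u, v => ∃ z, E u z ∧ P z ∧ chainRel E P n z v

lemma chainRel.snoc {α : Type*} {E : α → α → Prop} {P : α → Prop} :
    ∀ {n : ℕ} {u v w : α}, chainRel E P n u v → P v → E v w → chainRel E P (n + 1) u w
  | 0, u, v, w, h, hv, hvw => ⟨v, h, hv, hvw⟩
  | n + 1, u, v, w, ⟨z, huz, hz, hc⟩, hv, hvw => ⟨z, huz, hz, hc.snoc hv hvw⟩

lemma chainRel.rev {α : Type*} {E : α → α → Prop} {P : α → Prop}
    (hE : ∀ a b, E a b → E b a) :
    ∀ {n : ℕ} {u v : α}, chainRel E P n u v → chainRel E P n v u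
  | 0, u, v, h => hE _ _ h
  | n + 1, u, v, ⟨z, huz, hz, hc⟩ => (hc.rev hE).snoc hz (hE _ _ huz)

/-! ### The chain formula -/

/-- Helper vector lemmas. -/
lemma comp_vec2 {α β : Type*} (g : α → β) (u v : α) : g ∘ ![u, v] = ![g u, g v] := by
  funext i; fin_cases i <;> rfl

lemma comp_vec1 {α β : Type*} (g : α → β) (u : α) : g ∘ ![u] = ![g u] := by
  funext i; fin_cases i <;> rfl

/-- The formula asserting the existence of a chain of length `n+1` from `x` to `y`
through vertices satisfying `ν` and not colored `mark`. -/
def walkFml {c : ℕ} (η : Fml c 2) (ν : Fml c 1) (mark : Fin c) : ℕ → Fml c 2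
  | 0 => η
  | n + 1 => .ex ((Fml.rename η ![0, 2]).and
      (((Fml.rename ν ![2]).and (.not (.col mark 2))).and
        (Fml.rename (walkFml η ν mark n) ![2, 1])))

lemma snoc3_0 {α : Type*} (u v w : α) : (Fin.snoc ![u, v] w : Fin 3 → α) 0 = u := by
  rw [show (0 : Fin 3) = Fin.castSucc 0 by rfl, Fin.snoc_castSucc]; rfl

lemma snoc3_1 {α : Type*} (u v w : α) : (Fin.snoc ![u, v] w : Fin 3 → α) 1 = v := by
  rw [show (1 : Fin 3) = Fin.castSucc 1 by rfl, Fin.snoc_castSucc]; rfl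

lemma snoc3_2 {α : Type*} (u v w : α) : (Fin.snoc ![u, v] w : Fin 3 → α) 2 = w := by
  rw [show (2 : Fin 3) = Fin.last 2 by rfl, Fin.snoc_last]

lemma sat_walkFml {c : ℕ} {A : CGraph c} (η : Fml c 2) (ν : Fml c 1) (mark : Fin c) :
    ∀ (n : ℕ) (u v : A.V),
      Fml.Sat A (walkFml η ν mark n) ![u, v] ↔
        chainRel (fun a b => Fml.Sat A η ![a, b])
          (fun z => Fml.Sat A ν ![z] ∧ z ∉ A.color mark) n u v := by
  intro n
  induction n with
  | zero => intro u v; rfl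
  | succ n ih =>
    intro u v
    simp only [walkFml, Fml.Sat, Fml.sat_and, Fml.sat_rename, chainRel]
    refine exists_congr fun w => ?_
    have h1 : (Fin.snoc ![u, v] w ∘ ![0, 2] : Fin 2 → A.V) = ![u, w] := by
      funext i; fin_cases i
      · exact snoc3_0 u v w
      · exact snoc3_2 u v w
    have h2 : (Fin.snoc ![u, v] w ∘ ![2] : Fin 1 → A.V) = ![w] := by
      funext i; fin_cases i
      exact snoc3_2 u v w
    have h3 : (Fin.snoc ![u, v] w ∘ ![2, 1] : Fin 2 → A.V) = ![w, v] := by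
      funext i; fin_cases i
      · exact snoc3_2 u v w
      · exact snoc3_1 u v w
    have h4 : (Fin.snoc ![u, v] w : Fin 3 → A.V) 2 = w := snoc3_2 u v w
    rw [h1, h2, h3, h4, ih w v]

/-! ### Exact subdivisions -/

/-- Ordered adjacent pairs. -/
abbrev DartT (H : FGraph) : Type := {p : H.V × H.V // H.G.Adj p.1 p.2}

instance (H : FGraph) : Finite (DartT H) := by unfold DartT; infer_instance

/-- Vertices of the `s`-subdivision: branch vertices plus `s` interior vertices on
each ordered adjacent pair. -/
abbrev subdivV (H : FGraph) (s : ℕ) : Type := H.V ⊕ (DartT H × Fin s)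

instance (H : FGraph) (s : ℕ) : Finite (subdivV H s) := by unfold subdivV; infer_instance

def subdivAdj (H : FGraph) (s : ℕ) : subdivV H s → subdivV H s → Prop
  | .inl _, .inl _ => False
  | .inl u, .inr (d, i) => (u = d.1.1 ∧ i.val = 0) ∨ (u = d.1.2 ∧ i.val = s - 1)
  | .inr (d, i), .inl v => (v = d.1.1 ∧ i.val = 0) ∨ (v = d.1.2 ∧ i.val = s - 1)
  | .inr (d, i), .inr (e, j) => d = e ∧ (i.val + 1 = j.val ∨ j.val + 1 = i.val)

def subdivG (H : FGraph) (s : ℕ) : SimpleGraph (subdivV H s) where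
  Adj := subdivAdj H s
  symm := by
    constructor
    rintro (u | ⟨d, i⟩) (v | ⟨e, j⟩) h <;> simp only [subdivAdj] at h ⊢ <;> tauto
  loopless := by
    constructor
    rintro (u | ⟨d, i⟩) h
    · exact h
    · rcases h with ⟨-, h | h⟩ <;> omega

/-- The `s`-subdivision as a finite graph. -/
def subdivF (H : FGraph) (s : ℕ) : FGraph := { V := subdivV H s, G := subdivG H s }

namespace Subdiv

variable {H : FGraph} {s : ℕ}

lemma adj_inl {u : H.V} {b : subdivV H s} (h : (subdivG H s).Adj (Sum.inl u) b) :
    ∃ d i, b = Sum.inr (d, i) ∧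
      ((u = d.1.1 ∧ i.val = 0) ∨ (u = d.1.2 ∧ i.val = s - 1)) := by
  match b, h with
  | .inr (d, i), h => exact ⟨d, i, rfl, h⟩

lemma adj_inr_inl {d : DartT H} {i : Fin s} {v : H.V}
    (h : (subdivG H s).Adj (Sum.inr (d, i)) (Sum.inl v)) :
    (v = d.1.1 ∧ i.val = 0) ∨ (v = d.1.2 ∧ i.val = s - 1) := h

lemma adj_inr_inr {d e : DartT H} {i j : Fin s}
    (h : (subdivG H s).Adj (Sum.inr (d, i)) (Sum.inr (e, j))) :
    d = e ∧ (i.val + 1 = j.val ∨ j.val + 1 = i.val) := h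

/-- Interior-avoiding chains starting inside a dart gadget end at one of its two
branch vertices. -/
lemma chain_sound : ∀ (n : ℕ) (d : DartT H) (i : Fin s) (v : H.V),
    chainRel (subdivG H s).Adj (fun z => z ∉ Set.range Sum.inl) n
      (Sum.inr (d, i)) (Sum.inl v) → v = d.1.1 ∨ v = d.1.2
  | 0, d, i, v, h => by rcases adj_inr_inl h with ⟨h1, -⟩ | ⟨h1, -⟩ <;> [left; right] <;> exact h1
  | n + 1, d, i, v, ⟨z, hadj, hz, hc⟩ => by
    match z, hz with
    | .inr (e, j), _ =>
      obtain ⟨rfl, -⟩ := adj_inr_inr hadj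
      exact chain_sound n _ j v hc
    | .inl w, hz => exact absurd ⟨w, rfl⟩ hz

lemma decode_sound (hs : 1 ≤ s) {u v : H.V} (hne : u ≠ v)
    (h : chainRel (subdivG H s).Adj (fun z => z ∉ Set.range Sum.inl) s
      (Sum.inl u) (Sum.inl v)) : H.G.Adj u v := by
  obtain ⟨n, rfl⟩ : ∃ n, s = n + 1 := ⟨s - 1, by omega⟩
  obtain ⟨z, hadj, hz, hc⟩ := h
  match z, hz with
  | .inl w, hz => exact absurd ⟨w, rfl⟩ hz
  | .inr (d, i), _ =>
    have hu : u = d.1.1 ∨ u = d.1.2 := by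
      rcases adj_inl hadj with ⟨d', i', he, hcase⟩
      obtain ⟨rfl, rfl⟩ : d' = d ∧ i' = i := by
        refine ⟨?_, ?_⟩ <;> cases he <;> rfl
      rcases hcase with ⟨h1, -⟩ | ⟨h1, -⟩ <;> [left; right] <;> exact h1
    have hv := chain_sound n d i v hc
    have hd := d.2
    rcases hu with rfl | rfl <;> rcases hv with hv | hv
    · exact absurd hv.symm hne
    · rw [hv]; exact hd
    · rw [hv]; exact hd.symm
    · exact absurd hv.symm hne

lemma decode_complete (hs : 1 ≤ s) {u v : H.V} (h : H.G.Adj u v) :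
    chainRel (subdivG H s).Adj (fun z => z ∉ Set.range Sum.inl) s
      (Sum.inl u) (Sum.inl v) := by
  set d : DartT H := ⟨(u, v), h⟩ with hd
  have aux : ∀ k, k < s → chainRel (subdivG H s).Adj (fun z => z ∉ Set.range Sum.inl) k
      (Sum.inr (d, ⟨s - 1 - k, by omega⟩)) (Sum.inl v) := by
    intro k
    induction k with
    | zero =>
      intro hk
      show (subdivG H s).Adj _ _
      exact Or.inr ⟨rfl, by simp⟩
    | succ k ih =>
      intro hk
      refine ⟨Sum.inr (d, ⟨s - 1 - k, by omega⟩), ?_, ?_, ih (by omega)⟩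
      · exact ⟨rfl, by simp; omega⟩
      · rintro ⟨w, hw⟩; cases hw
  obtain ⟨n, rfl⟩ : ∃ n, s = n + 1 := ⟨s - 1, by omega⟩
  refine ⟨Sum.inr (d, ⟨0, by omega⟩), Or.inl ⟨rfl, rfl⟩, ?_, ?_⟩
  · rintro ⟨w, hw⟩; cases hw
  · have := aux n (by omega)
    simpa using this

/-- Any walk between distinct branch vertices has length at least `s + 1`. -/
lemma walk_long (hs : 1 ≤ s) : ∀ n : ℕ,
    (∀ (d : DartT H) (i : Fin s) (v : H.V)
        (W : (subdivG H s).Walk (Sum.inr (d, i)) (Sum.inl v)), W.length ≤ n →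
      (v = d.1.1 ∧ i.val + 1 ≤ W.length) ∨ (v = d.1.2 ∧ s - i.val ≤ W.length) ∨
        (s + 1 ≤ W.length)) ∧
    (∀ u v : H.V, u ≠ v → ∀ (W : (subdivG H s).Walk (Sum.inl u) (Sum.inl v)),
        W.length ≤ n → s + 1 ≤ W.length) := by
  intro n
  induction n with
  | zero =>
    constructor
    · intro d i v W hW
      exact absurd (SimpleGraph.Walk.eq_of_length_eq_zero (Nat.le_zero.mp hW))
        (fun h => by cases h)
    · intro u v hne W hW
      exact absurd (SimpleGraph.Walk.eq_of_length_eq_zero (Nat.le_zero.mp hW))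
        (fun h => hne (Sum.inl.inj h))
  | succ n ih =>
    obtain ⟨IH1, IH2⟩ := ih
    constructor
    · intro d i v W hW
      cases W with
      | cons hadj W' =>
        rename_i b
        simp only [SimpleGraph.Walk.length_cons] at hW ⊢
        obtain z | ⟨e, j⟩ := b
        · rcases adj_inr_inl hadj with ⟨hz1, hi⟩ | ⟨hz1, hi⟩
          · by_cases hzv : z = v
            · left; exact ⟨by rw [← hzv]; exact hz1, by omega⟩
            · have := IH2 z v hzv W' (by omega)
              right; right; omega
          · by_cases hzv : z = v
            · right; left; exact ⟨by rw [← hzv]; exact hz1, by omega⟩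
            · have := IH2 z v hzv W' (by omega)
              right; right; omega
        · obtain ⟨rfl, hj⟩ := adj_inr_inr hadj
          rcases IH1 d j v W' (by omega) with ⟨h1, h2⟩ | ⟨h1, h2⟩ | h1
          · left; exact ⟨h1, by omega⟩
          · right; left; exact ⟨h1, by omega⟩
          · right; right; omega
    · intro u v hne W hW
      cases W with
      | nil => exact absurd rfl hne
      | cons hadj W' =>
        rename_i b
        simp only [SimpleGraph.Walk.length_cons] at hW ⊢
        obtain ⟨d, i, rfl, hcase⟩ := adj_inl hadj
        rcases IH1 d i v W' (by omega) with ⟨h1, h2⟩ | ⟨h1, h2⟩ | h1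
        · rcases hcase with ⟨h3, -⟩ | ⟨h3, h4⟩
          · exact absurd (h3.trans h1.symm) hne
          · omega
        · rcases hcase with ⟨h3, h4⟩ | ⟨h3, -⟩
          · omega
          · exact absurd (h3.trans h1.symm) hne
        · omega

lemma walk_ge (hs : 1 ≤ s) {u v : H.V} (hne : u ≠ v)
    (W : (subdivG H s).Walk (Sum.inl u) (Sum.inl v)) : s + 1 ≤ W.length :=
  (walk_long hs W.length).2 u v hne W le_rfl

/-- Left neighbour of an interior vertex. -/
def leftNb {H : FGraph} {s : ℕ} (d : DartT H) (i : Fin s) : subdivV H s :=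
  if i.val = 0 then Sum.inl d.1.1
  else Sum.inr (d, ⟨i.val - 1, lt_of_le_of_lt (Nat.sub_le _ _) i.isLt⟩)

/-- Right neighbour of an interior vertex. -/
def rightNb {H : FGraph} {s : ℕ} (d : DartT H) (i : Fin s) : subdivV H s :=
  if h : i.val = s - 1 then Sum.inl d.1.2
  else Sum.inr (d, ⟨i.val + 1, by have h1 := i.isLt; omega⟩)

lemma nbhd {H : FGraph} {s : ℕ} {d : DartT H} {i : Fin s} {b : subdivV H s}
    (h : (subdivG H s).Adj (Sum.inr (d, i)) b) : b = leftNb d i ∨ b = rightNb d i := by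
  rcases b with v | ⟨e, j⟩
  · rcases adj_inr_inl h with ⟨rfl, hi⟩ | ⟨rfl, hi⟩
    · left; rw [leftNb, if_pos hi]
    · right; rw [rightNb, dif_pos hi]
  · obtain ⟨rfl, hij | hij⟩ := adj_inr_inr h
    · right
      have hne : ¬ i.val = s - 1 := by have := j.isLt; omega
      rw [rightNb, dif_neg hne]
      have : j = ⟨i.val + 1, by have := i.isLt; omega⟩ := by
        apply Fin.ext; simp; omega
      rw [this]
    · left
      have hne0 : ¬ i.val = 0 := by omega
      rw [leftNb, if_neg hne0]
      have : j = ⟨i.val - 1, lt_of_le_of_lt (Nat.sub_le _ _) i.isLt⟩ := by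
        apply Fin.ext; simp; omega
      rw [this]

section MinorData

variable {H H' : FGraph} {s r : ℕ} {φ : H'.V → Set (subdivV H s)}

/-- Extract a short walk between two vertices of a part. -/
lemma exists_walk_pair
    (hrad : ∀ v : H'.V, ∃ c : ↥(φ v), ∀ u : ↥(φ v),
      ((subdivF H s).G.induce (φ v)).Reachable c u ∧
        ((subdivF H s).G.induce (φ v)).dist c u ≤ r)
    (y : H'.V) (u v : ↥(φ y)) :
    ∃ W : ((subdivF H s).G.induce (φ y)).Walk u v, W.length ≤ 2 * r := by
  obtain ⟨c, hc⟩ := hrad y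
  obtain ⟨W1, hW1⟩ := (hc u).1.exists_walk_length_eq_dist
  obtain ⟨W2, hW2⟩ := (hc v).1.exists_walk_length_eq_dist
  refine ⟨W1.reverse.append W2, ?_⟩
  rw [SimpleGraph.Walk.length_append, SimpleGraph.Walk.length_reverse]
  have h1 := (hc u).2
  have h2 := (hc v).2
  omega

/-- Extract a short walk in the host graph between two vertices of a part. -/
lemma exists_xwalk
    (hrad : ∀ v : H'.V, ∃ c : ↥(φ v), ∀ u : ↥(φ v),
      ((subdivF H s).G.induce (φ v)).Reachable c u ∧
        ((subdivF H s).G.induce (φ v)).dist c u ≤ r)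
    (y : H'.V) (u v : ↥(φ y)) :
    ∃ W : (subdivG H s).Walk u.val v.val, W.length ≤ 2 * r := by
  obtain ⟨W, hW⟩ := exists_walk_pair hrad y u v
  exact ⟨W.map ⟨Subtype.val, fun {a b} h => h⟩,
    by rw [SimpleGraph.Walk.length_map]; exact hW⟩

/-- Two parts containing branch vertices are not adjacent in the minor. -/
lemma branch_no_adj (hsr : 4 * r + 2 ≤ s)
    (hdisj : ∀ u v, u ≠ v → Disjoint (φ u) (φ v))
    (hrad : ∀ v : H'.V, ∃ c : ↥(φ v), ∀ u : ↥(φ v),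
      ((subdivF H s).G.induce (φ v)).Reachable c u ∧
        ((subdivF H s).G.induce (φ v)).dist c u ≤ r)
    (hedge : ∀ u v, H'.G.Adj u v → ∃ a ∈ φ u, ∃ b ∈ φ v, (subdivF H s).G.Adj a b)
    {y₁ y₂ : H'.V} (h : H'.G.Adj y₁ y₂) {u₁ u₂ : H.V}
    (h1 : Sum.inl u₁ ∈ φ y₁) (h2 : Sum.inl u₂ ∈ φ y₂) : False := by
  obtain ⟨a, ha, b, hb, hab⟩ := hedge y₁ y₂ h
  obtain ⟨W1, hW1⟩ := exists_xwalk hrad y₁ ⟨Sum.inl u₁, h1⟩ ⟨a, ha⟩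
  obtain ⟨W2, hW2⟩ := exists_xwalk hrad y₂ ⟨b, hb⟩ ⟨Sum.inl u₂, h2⟩
  have hne : u₁ ≠ u₂ := by
    rintro rfl
    exact (Set.disjoint_left.mp (hdisj y₁ y₂ h.ne) h1) h2
  have hW := walk_ge (by omega : 1 ≤ s) hne (W1.append ((SimpleGraph.Walk.cons (show (subdivG H s).Adj a b from hab) W2)))
  rw [SimpleGraph.Walk.length_append, SimpleGraph.Walk.length_cons] at hW
  omega

/-- All vertices of an interior-only connected part lie on a single dart gadget. -/
lemma walk_dart {y : H'.V} (hnb : ∀ w, Sum.inl w ∉ φ y) :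
    ∀ {p q : ↥(φ y)} (_W : ((subdivF H s).G.induce (φ y)).Walk p q) (d : DartT H)
      (i : Fin s), p.val = Sum.inr (d, i) → ∃ j : Fin s, q.val = Sum.inr (d, j) := by
  intro p q W
  induction W with
  | nil => exact fun d i hp => ⟨i, hp⟩
  | @cons p t q hadj W ih =>
    intro d i hp
    rcases htv : t.val with w | ⟨e, j⟩
    · exact absurd (htv ▸ t.2) (hnb w)
    · have hadj' : (subdivG H s).Adj p.val t.val := hadj
      rw [hp, htv] at hadj'
      obtain ⟨rfl, -⟩ := adj_inr_inr hadj'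
      exact ih d j htv

/-- Discrete intermediate value property along a part inside a dart gadget. -/
lemma walk_interval {y : H'.V} (hnb : ∀ w, Sum.inl w ∉ φ y) :
    ∀ {p q : ↥(φ y)} (_W : ((subdivF H s).G.induce (φ y)).Walk p q) (d : DartT H)
      (ip iq : Fin s), p.val = Sum.inr (d, ip) → q.val = Sum.inr (d, iq) →
      ∀ j : ℕ, ((ip.val ≤ j ∧ j ≤ iq.val) ∨ (iq.val ≤ j ∧ j ≤ ip.val)) →
      ∃ hj : j < s, Sum.inr (d, ⟨j, hj⟩) ∈ φ y := by
  intro p q W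
  induction W with
  | nil =>
    rename_i p
    intro d ip iq hp hq j hj
    rw [hp] at hq
    have hiq : ip = iq := by
      have := (Sum.inr.inj hq)
      exact (Prod.ext_iff.mp this).2
    have hje : j = ip.val := by omega
    subst hje
    refine ⟨ip.isLt, ?_⟩
    have : (⟨ip.val, ip.isLt⟩ : Fin s) = ip := Fin.ext rfl
    rw [this, ← hp]
    exact p.2
  | @cons p t q hadj W ih =>
    intro d ip iq hp hq j hj
    rcases htv : t.val with w | ⟨e, it⟩
    · exact absurd (htv ▸ t.2) (hnb w)
    · have hadj' : (subdivG H s).Adj p.val t.val := hadj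
      rw [hp, htv] at hadj'
      obtain ⟨rfl, hstep⟩ := adj_inr_inr hadj'
      by_cases hcase : (it.val ≤ j ∧ j ≤ iq.val) ∨ (iq.val ≤ j ∧ j ≤ it.val)
      · exact ih d it iq htv hq j hcase
      · have hje : j = ip.val := by omega
        subst hje
        refine ⟨ip.isLt, ?_⟩
        have : (⟨ip.val, ip.isLt⟩ : Fin s) = ip := Fin.ext rfl
        rw [this, ← hp]
        exact p.2

/-- Every part without branch vertices has (at most) two boundary vertices meeting
all neighbouring parts. -/
lemma boundary_pair
    (hnempty : ∀ v, (φ v).Nonempty)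
    (hdisj : ∀ u v, u ≠ v → Disjoint (φ u) (φ v))
    (hrad : ∀ v : H'.V, ∃ c : ↥(φ v), ∀ u : ↥(φ v),
      ((subdivF H s).G.induce (φ v)).Reachable c u ∧
        ((subdivF H s).G.induce (φ v)).dist c u ≤ r)
    (hedge : ∀ u v, H'.G.Adj u v → ∃ a ∈ φ u, ∃ b ∈ φ v, (subdivF H s).G.Adj a b)
    {y : H'.V} (hnb : ∀ w, Sum.inl w ∉ φ y) :
    ∃ L R : subdivV H s, ∀ y', H'.G.Adj y y' → L ∈ φ y' ∨ R ∈ φ y' := by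
  obtain ⟨a₀, ha₀⟩ := hnempty y
  rcases ha : a₀ with w | ⟨d, i₀⟩
  · exact absurd (ha ▸ ha₀) (hnb w)
  rw [ha] at ha₀
  set P : Set ℕ := {j | ∃ hj : j < s, Sum.inr (d, ⟨j, hj⟩) ∈ φ y} with hP
  have hPne : P.Nonempty := ⟨i₀.val, i₀.isLt, by
    have : (⟨i₀.val, i₀.isLt⟩ : Fin s) = i₀ := Fin.ext rfl
    rw [this]; exact ha₀⟩
  have hPbdd : BddAbove P := ⟨s, fun j hj => le_of_lt hj.1⟩
  obtain ⟨hlos, hlomem⟩ := Nat.sInf_mem hPne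
  obtain ⟨hhis, hhimem⟩ := Nat.sSup_mem hPne hPbdd
  set lo := sInf P
  set hi := sSup P
  have hbound : ∀ j ∈ P, lo ≤ j ∧ j ≤ hi := fun j hj => ⟨Nat.sInf_le hj, le_csSup hPbdd hj⟩
  have hlohi : lo ≤ hi := (hbound lo ⟨hlos, hlomem⟩).2
  -- interval property
  have hfull : ∀ j, lo ≤ j → j ≤ hi → j ∈ P := by
    intro j h1 h2
    obtain ⟨W, -⟩ := exists_walk_pair hrad y ⟨_, hlomem⟩ ⟨_, hhimem⟩
    exact walk_interval hnb W d ⟨lo, hlos⟩ ⟨hi, hhis⟩ rfl rfl j (Or.inl ⟨h1, h2⟩)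
  refine ⟨if lo = 0 then Sum.inl d.1.1 else
      Sum.inr (d, ⟨lo - 1, lt_of_le_of_lt (Nat.sub_le _ _) hlos⟩),
    if h : hi = s - 1 then Sum.inl d.1.2 else
      Sum.inr (d, ⟨hi + 1, by omega⟩), ?_⟩
  intro y' hady'
  obtain ⟨a, ha', b, hb, hab⟩ := hedge y y' hady'
  obtain ⟨ia, hia⟩ : ∃ ia : Fin s, a = Sum.inr (d, ia) := by
    obtain ⟨W, -⟩ := exists_walk_pair hrad y ⟨_, ha₀⟩ ⟨a, ha'⟩
    exact walk_dart hnb W d i₀ rfl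
  have hiaP : ia.val ∈ P := ⟨ia.isLt, by
    have : (⟨ia.val, ia.isLt⟩ : Fin s) = ia := Fin.ext rfl
    rw [this, ← hia]; exact ha'⟩
  have hbny : b ∉ φ y := Set.disjoint_left.mp (hdisj y' y hady'.ne') hb
  rw [hia] at hab
  rcases nbhd hab with rfl | rfl
  · -- left neighbour
    by_cases hi0 : ia.val = 0
    · -- ia.val = 0, so lo = 0
      rw [leftNb, if_pos hi0] at hb
      have hlo0 : lo = 0 := by have := (hbound _ hiaP).1; omega
      left; rw [if_pos hlo0]
      exact hb
    · -- interior left neighbour: forces ia.val = lo ≠ 0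
      rw [leftNb, if_neg hi0] at hb
      have hout : ia.val - 1 ∉ P := by
        intro hmem
        apply hbny
        rw [leftNb, if_neg hi0]
        obtain ⟨hj, hjm⟩ := hmem
        have : (⟨ia.val - 1, lt_of_le_of_lt (Nat.sub_le _ _) ia.isLt⟩ : Fin s)
            = ⟨ia.val - 1, hj⟩ := Fin.ext rfl
        rw [this]; exact hjm
      have hialo : ia.val = lo := by
        have h1 := (hbound _ hiaP).1
        have h2 := (hbound _ hiaP).2
        by_contra hcon
        exact hout (hfull (ia.val - 1) (by omega) (by omega))
      have hlo0 : ¬ lo = 0 := by omega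
      left; rw [if_neg hlo0]
      have : (⟨lo - 1, lt_of_le_of_lt (Nat.sub_le _ _) hlos⟩ : Fin s)
          = ⟨ia.val - 1, lt_of_le_of_lt (Nat.sub_le _ _) ia.isLt⟩ := Fin.ext (by simp [hialo])
      rw [this]; exact hb
  · -- right neighbour
    by_cases his1 : ia.val = s - 1
    · rw [rightNb, dif_pos his1] at hb
      have hhi1 : hi = s - 1 := by
        have h1 := (hbound _ hiaP).2
        omega
      right; rw [dif_pos hhi1]
      exact hb
    · rw [rightNb, dif_neg his1] at hb
      have hout : ia.val + 1 ∉ P := by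
        intro hmem
        apply hbny
        rw [rightNb, dif_neg his1]
        obtain ⟨hj, hjm⟩ := hmem
        have : (⟨ia.val + 1, by have := ia.isLt; omega⟩ : Fin s) = ⟨ia.val + 1, hj⟩ :=
          Fin.ext rfl
        rw [this]; exact hjm
      have hiahi : ia.val = hi := by
        have h1 := (hbound _ hiaP).1
        have h2 := (hbound _ hiaP).2
        by_contra hcon
        exact hout (hfull (ia.val + 1) (by omega) (by omega))
      have hhine : ¬ hi = s - 1 := by have := ia.isLt; omega
      right; rw [dif_neg hhine]
      have : (⟨hi + 1, by omega⟩ : Fin s) = ⟨ia.val + 1, by have := ia.isLt; omega⟩ :=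
        Fin.ext (by simp [hiahi])
      rw [this]; exact hb

end MinorData

/-- Shallow minors at depth `r` of `s`-subdivisions, `s ≥ 4r+2`, have average
degree at most `4`. -/
lemma subdiv_minor_bound {H H' : FGraph} {s r : ℕ} (hsr : 4 * r + 2 ≤ s)
    (hm : IsShallowMinor r H' (subdivF H s)) :
    2 * Nat.card H'.G.edgeSet ≤ 4 * Nat.card H'.V := by
  classical
  obtain ⟨φ, hnempty, hdisj, hrad, hedge⟩ := hm
  set pt : H'.V → Prop := fun y => ∀ w, Sum.inl w ∉ φ y with hpt
  have hone : ∀ {y₁ y₂}, H'.G.Adj y₁ y₂ → ¬ pt y₁ → pt y₂ := by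
    intro y₁ y₂ h hb w hw
    obtain ⟨w', hw'⟩ := not_forall.mp hb
    exact branch_no_adj hsr hdisj hrad hedge h (not_not.mp hw') hw
  have hbp : ∀ y, pt y → ∃ L R : subdivV H s,
      ∀ y', H'.G.Adj y y' → L ∈ φ y' ∨ R ∈ φ y' :=
    fun y hy => boundary_pair hnempty hdisj hrad hedge hy
  set side : ∀ (y : H'.V), pt y → H'.V → Fin 2 := fun y hy y' =>
    if (hbp y hy).choose ∈ φ y' then 0 else 1 with hsidedef
  have hside : ∀ y (hy : pt y) (y₁ y₂ : H'.V), H'.G.Adj y y₁ → H'.G.Adj y y₂ →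
      side y hy y₁ = side y hy y₂ → y₁ = y₂ := by
    intro y hy y₁ y₂ h1 h2 heq
    by_contra hne12
    have hdj := hdisj y₁ y₂ hne12
    simp only [hsidedef] at heq
    split_ifs at heq with hL1 hL2 hL2
    · exact (Set.disjoint_left.mp hdj hL1) hL2
    · exact absurd heq (by decide)
    · exact absurd heq (by decide)
    · have hy1 := ((hbp y hy).choose_spec.choose_spec y₁ h1).resolve_left hL1
      have hy2 := ((hbp y hy).choose_spec.choose_spec y₂ h2).resolve_left hL2
      exact (Set.disjoint_left.mp hdj hy1) hy2
  set F : H'.G.Dart → (H'.V × Fin 2) × Fin 2 := fun dt =>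
    if h : pt dt.toProd.1 then ((dt.toProd.1, side _ h dt.toProd.2), 0)
    else ((dt.toProd.2, side _ (hone dt.adj h) dt.toProd.1), 1) with hFdef
  have hFinj : Function.Injective F := by
    rintro ⟨⟨x1, y1⟩, a1⟩ ⟨⟨x2, y2⟩, a2⟩ hF
    simp only [hFdef] at hF
    split_ifs at hF with h1 h2 h2
    · simp only [Prod.mk.injEq] at hF
      obtain ⟨⟨hx, hs⟩, -⟩ := hF
      subst hx
      have hy : y1 = y2 := hside x1 h1 y1 y2 a1 a2 hs
      subst hy
      rfl
    · simp only [Prod.mk.injEq] at hF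
      exact absurd hF.2 (by decide)
    · simp only [Prod.mk.injEq] at hF
      exact absurd hF.2 (by decide)
    · simp only [Prod.mk.injEq] at hF
      obtain ⟨⟨hy, hs⟩, -⟩ := hF
      subst hy
      have hx : x1 = x2 := hside y1 (hone a1 h1) x1 x2 a1.symm a2.symm hs
      subst hx
      rfl
  have hcard : Nat.card H'.G.Dart ≤ Nat.card ((H'.V × Fin 2) × Fin 2) :=
    Nat.card_le_card_of_injective F hFinj
  have hc2 : Nat.card ((H'.V × Fin 2) × Fin 2) = 4 * Nat.card H'.V := by
    rw [Nat.card_prod, Nat.card_prod]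
    have : Nat.card (Fin 2) = 2 := by
      rw [Nat.card_eq_fintype_card, Fintype.card_fin]
    rw [this]; ring
  letI : Fintype H'.V := Fintype.ofFinite _
  letI : DecidableRel H'.G.Adj := Classical.decRel _
  have h1 : Nat.card H'.G.Dart = Fintype.card H'.G.Dart := Nat.card_eq_fintype_card
  have h2 := SimpleGraph.dart_card_eq_twice_card_edges H'.G
  have h3 : H'.G.edgeFinset.card = Fintype.card H'.G.edgeSet := SimpleGraph.edgeFinset_card
  have h4 : Nat.card H'.G.edgeSet = Fintype.card H'.G.edgeSet := Nat.card_eq_fintype_card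
  omega

end Subdiv

/-! ### Transport of shallow minors along isomorphisms -/

lemma reach_of_iso {V W : Type} {G : SimpleGraph V} {G' : SimpleGraph W} (e : G ≃g G')
    {u v : V} (h : G.Reachable u v) : G'.Reachable (e u) (e v) :=
  h.elim fun W' => (W'.map e.toHom).reachable

lemma dist_le_of_iso {V W : Type} {G : SimpleGraph V} {G' : SimpleGraph W} (e : G ≃g G')
    {u v : V} (h : G.Reachable u v) : G'.dist (e u) (e v) ≤ G.dist u v := by
  obtain ⟨W', hW⟩ := h.exists_walk_length_eq_dist
  calc G'.dist (e u) (e v) ≤ (W'.map e.toHom).length := SimpleGraph.dist_le _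
    _ = W'.length := SimpleGraph.Walk.length_map _ _
    _ = G.dist u v := hW

/-- The induced-subgraph isomorphism arising from a graph isomorphism. -/
noncomputable def isoInduce {V W : Type} {G : SimpleGraph V} {G' : SimpleGraph W}
    (e : G ≃g G') (S : Set V) : G.induce S ≃g G'.induce (⇑e '' S) where
  toEquiv := Equiv.Set.image ⇑e S e.injective
  map_rel_iff' := by
    intro a b
    exact e.map_adj_iff

lemma shallowMinor_of_iso {r : ℕ} {X Y H' : FGraph} (e : X.G ≃g Y.G)
    (hm : IsShallowMinor r H' X) : IsShallowMinor r H' Y := by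
  obtain ⟨φ, h1, h2, h3, h4⟩ := hm
  refine ⟨fun y => ⇑e '' (φ y), fun v => (h1 v).image _, fun u v huv =>
    Set.disjoint_image_of_injective e.injective (h2 u v huv), ?_, ?_⟩
  · intro v
    obtain ⟨c, hc⟩ := h3 v
    refine ⟨isoInduce e (φ v) c, fun u' => ?_⟩
    set u := (isoInduce e (φ v)).symm u' with hu
    have hu' : (isoInduce e (φ v)) u = u' := (isoInduce e (φ v)).apply_symm_apply u'
    constructor
    · rw [← hu']
      exact reach_of_iso (isoInduce e (φ v)) (hc u).1
    · rw [← hu']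
      exact le_trans (dist_le_of_iso (isoInduce e (φ v)) (hc u).1) (hc u).2
  · intro u v huv
    obtain ⟨a, ha, b, hb, hab⟩ := h4 u v huv
    exact ⟨e a, Set.mem_image_of_mem _ ha, e b, Set.mem_image_of_mem _ hb,
      e.map_adj_iff.mpr hab⟩

/-- Crude bound: number of vertices of a shallow minor. -/
lemma minor_card_le {r : ℕ} {X H' : FGraph} (hm : IsShallowMinor r H' X) :
    Nat.card H'.V ≤ Nat.card X.V := by
  obtain ⟨φ, h1, h2, -, -⟩ := hm
  have : Function.Injective (fun y => (h1 y).choose) := by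
    intro y1 y2 h
    by_contra hne
    have h' : (h1 y1).choose = (h1 y2).choose := h
    have h1c := (h1 y1).choose_spec
    rw [h'] at h1c
    exact (Set.disjoint_left.mp (h2 y1 y2 hne) h1c) (h1 y2).choose_spec
  exact Nat.card_le_card_of_injective _ this

/-- Crude bound: twice the number of edges is at most the square of the number of
vertices. -/
lemma crude_edge_bound (H' : FGraph) :
    2 * Nat.card H'.G.edgeSet ≤ Nat.card H'.V * Nat.card H'.V := by
  classical
  letI : Fintype H'.V := Fintype.ofFinite _
  letI : DecidableRel H'.G.Adj := Classical.decRel _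
  have h1 : Nat.card H'.G.Dart = Fintype.card H'.G.Dart := Nat.card_eq_fintype_card
  have h2 := SimpleGraph.dart_card_eq_twice_card_edges H'.G
  have h3 : H'.G.edgeFinset.card = Fintype.card H'.G.edgeSet := SimpleGraph.edgeFinset_card
  have h4 : Nat.card H'.G.edgeSet = Fintype.card H'.G.edgeSet := Nat.card_eq_fintype_card
  have h5 : Nat.card H'.G.Dart ≤ Nat.card (H'.V × H'.V) :=
    Nat.card_le_card_of_injective (fun dt => dt.toProd)
      (fun d1 d2 h => SimpleGraph.Dart.ext d1 d2 h)
  rw [Nat.card_prod] at h5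
  omega

/-- The diagonal class of subdivisions has bounded expansion. -/
lemma diag_bounded_expansion (d : ℕ → FGraph) (hd : ∀ n, ∃ Hb : FGraph, d n = subdivF Hb (n + 1)) :
    BoundedExpansion {X | ∃ n, Nonempty (X.G ≃g (d n).G)} := by
  refine ⟨fun r => 4 + (Finset.range (4 * r + 2)).sup
    (fun n => Nat.card (d n).V * Nat.card (d n).V), ?_⟩
  intro r G hG H' hm
  obtain ⟨n, ⟨e⟩⟩ := hG
  obtain ⟨Hb, hHb⟩ := hd n
  have hm' : IsShallowMinor r H' (d n) := shallowMinor_of_iso e hm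
  set K := (Finset.range (4 * r + 2)).sup (fun n => Nat.card (d n).V * Nat.card (d n).V)
  show 2 * Nat.card H'.G.edgeSet ≤ (4 + K) * Nat.card H'.V
  by_cases hn : 4 * r + 2 ≤ n + 1
  · have hb : 2 * Nat.card H'.G.edgeSet ≤ 4 * Nat.card H'.V := by
      rw [hHb] at hm'
      exact Subdiv.subdiv_minor_bound hn hm'
    calc 2 * Nat.card H'.G.edgeSet ≤ 4 * Nat.card H'.V := hb
      _ ≤ (4 + K) * Nat.card H'.V := Nat.mul_le_mul_right _ (by omega)
  · have hsmall := crude_edge_bound H'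
    have hVle : Nat.card H'.V ≤ Nat.card (d n).V := minor_card_le hm'
    have hK : Nat.card (d n).V * Nat.card (d n).V ≤ K :=
      Finset.le_sup (f := fun n => Nat.card (d n).V * Nat.card (d n).V)
        (Finset.mem_range.mpr (by omega))
    have hNN : Nat.card (d n).V ≤ Nat.card (d n).V * Nat.card (d n).V := by
      rcases Nat.eq_zero_or_pos (Nat.card (d n).V) with h | h
      · omega
      · exact Nat.le_mul_of_pos_right _ h
    have hNle : Nat.card (d n).V ≤ 4 + K := by omega
    calc 2 * Nat.card H'.G.edgeSet ≤ Nat.card H'.V * Nat.card H'.V := hsmall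
      _ ≤ Nat.card (d n).V * Nat.card H'.V := Nat.mul_le_mul_right _ hVle
      _ ≤ (4 + K) * Nat.card H'.V := Nat.mul_le_mul_right _ hNle

/-! ### Composition of a transduction with subdivision decoding -/

/-- Adding one color to a colored graph. -/
def CGraph.addColor {c : ℕ} (A : CGraph c) (M : Set A.V) : CGraph (c + 1) :=
  { V := A.V, G := A.G, color := Fin.snoc A.color M }

lemma recolorS_addColor {c : ℕ} (A : CGraph c) (M : Set A.V) :
    (A.addColor M).recolorS Fin.castSucc = A := by
  have hcol : (Fin.snoc A.color M ∘ Fin.castSucc) = A.color := by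
    funext i; exact Fin.snoc_castSucc _ _ i
  show ({ V := A.V, G := A.G, color := Fin.snoc A.color M ∘ Fin.castSucc } : CGraph c) = A
  rw [hcol]

lemma chainRel_congr {α : Type*} {E E' : α → α → Prop} {P P' : α → Prop}
    (hE : ∀ a b, E a b ↔ E' a b) (hP : ∀ a, P a ↔ P' a) :
    ∀ (n : ℕ) (u v : α), chainRel E P n u v ↔ chainRel E' P' n u v
  | 0, u, v => hE u v
  | n + 1, u, v => by
    simp only [chainRel]
    exact exists_congr fun z => and_congr (hE u z)
      (and_congr (hP z) (chainRel_congr hE hP n z v))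

lemma sat_congr_color {c : ℕ} {V : Type} [Finite V] {G : SimpleGraph V}
    {col1 col2 : Fin c → Set V} (h : col1 = col2) {m : ℕ} (φ : Fml c m)
    (v : Fin m → V) :
    Fml.Sat { V := V, G := G, color := col1 } φ v ↔
      Fml.Sat { V := V, G := G, color := col2 } φ v := by
  subst h; exact Iff.rfl

/-- The transduction obtained by post-composing `T` with the decoding of exact
`s`-subdivisions. -/
noncomputable def Transduction.compose (T : Transduction) (s : ℕ) : Transduction where
  k := T.k
  kpos := T.kpos
  c := T.c + 1
  I := by
    refine
      { ν := (T.I.ν.recolor Fin.castSucc).and (.col (Fin.last T.c) 0)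
        η := ((Fml.not (.eq 0 1)).and
            ((Fml.col (Fin.last T.c) 0).and (Fml.col (Fin.last T.c) 1))).and
          (walkFml (T.I.η.recolor Fin.castSucc) (T.I.ν.recolor Fin.castSucc)
            (Fin.last T.c) s)
        symm := ?_
        irrefl := ?_ }
    · intro A u v h
      rw [Fml.sat_and] at h ⊢
      obtain ⟨h1, h2⟩ := h
      rw [Fml.sat_and] at h1 ⊢
      obtain ⟨hne, hmk⟩ := h1
      rw [Fml.sat_and] at hmk ⊢
      constructor
      · refine ⟨?_, hmk.2, hmk.1⟩
        simp only [Fml.Sat] at hne ⊢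
        simp only [Matrix.cons_val_zero, Matrix.cons_val_one, Matrix.head_cons] at hne ⊢
        exact fun hvu => hne hvu.symm
      · rw [sat_walkFml] at h2 ⊢
        refine chainRel.rev ?_ h2
        intro a b hab
        rw [Fml.sat_recolor] at hab ⊢
        exact T.I.symm (A.recolorS Fin.castSucc) a b hab
    · intro A v h
      rw [Fml.sat_and, Fml.sat_and] at h
      have hne := h.1.1
      exact hne (show (![v, v] : Fin 2 → A.V) 0 = ![v, v] 1 by simp)

/-- Key composition lemma: if `T` produces the `s`-subdivision of `Hb` from `G`,
then `T.compose s` produces `Hb` from `G`. -/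
lemma Transduction.compose_mem (T : Transduction) {s : ℕ} (hs : 1 ≤ s) (G Hb : FGraph)
    (h : T.mem G (subdivF Hb s)) : (T.compose s).mem G Hb := by
  classical
  obtain ⟨γ, ⟨e⟩⟩ := h
  set A := T.copyCGraph G γ with hA
  set M : Set A.V := {a | ∃ u : Hb.V, ((e (Sum.inl u)) : {v : A.V // Fml.Sat A T.I.ν ![v]}).val = a} with hM
  refine ⟨Fin.snoc γ M, ⟨?_⟩⟩
  set A' : CGraph (T.c + 1) := (T.compose s).copyCGraph G (Fin.snoc γ M) with hA'
  have hAA : A'.recolorS Fin.castSucc = A := recolorS_addColor A M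
  have hcolM : A'.color (Fin.last T.c) = M :=
    Fin.snoc_last (α := fun _ : Fin (T.c + 1) => Set (G.V × Fin T.k)) M γ
  -- satisfaction bridges
  have hcomp : (Fin.snoc γ M ∘ Fin.castSucc) = γ := by
    funext i; exact Fin.snoc_castSucc _ _ i
  have hrecN : ∀ a : A'.V, Fml.Sat A' (T.I.ν.recolor Fin.castSucc) ![a] ↔
      Fml.Sat A T.I.ν ![a] := by
    intro a
    rw [Fml.sat_recolor]
    exact sat_congr_color hcomp _ _
  have hrecE : ∀ a b : A'.V, Fml.Sat A' (T.I.η.recolor Fin.castSucc) ![a, b] ↔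
      Fml.Sat A T.I.η ![a, b] := by
    intro a b
    rw [Fml.sat_recolor]
    exact sat_congr_color hcomp _ _
  have hsatnu : ∀ a : A'.V,
      Fml.Sat A' ((T.compose s).I.ν) ![a] ↔ (Fml.Sat A T.I.ν ![a] ∧ a ∈ M) := by
    intro a
    show Fml.Sat A' ((T.I.ν.recolor Fin.castSucc).and (.col (Fin.last T.c) 0)) ![a] ↔ _
    rw [Fml.sat_and, hrecN]
    refine and_congr Iff.rfl ?_
    show (![a] 0 ∈ A'.color (Fin.last T.c)) ↔ a ∈ M
    rw [hcolM]
    simp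
    exact Iff.rfl
  -- the vertex bijection
  have hFmem : ∀ w : Hb.V, Fml.Sat A' ((T.compose s).I.ν) ![(e (Sum.inl w)).val] := by
    intro w
    refine (hsatnu _).mpr ?_
    exact ⟨(e (Sum.inl w)).2, ⟨w, rfl⟩⟩
  set F : Hb.V → {a : A'.V // Fml.Sat A' ((T.compose s).I.ν) ![a]} :=
    fun w => ⟨(e (Sum.inl w)).val, hFmem w⟩ with hF
  have hFinj : Function.Injective F := by
    intro w1 w2 hw
    have h0 := congrArg Subtype.val hw
    have h2 : e (Sum.inl w1) = e (Sum.inl w2) := Subtype.coe_injective h0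
    exact Sum.inl.inj (e.injective h2)
  have hFsurj : Function.Surjective F := by
    rintro ⟨a, ha⟩
    obtain ⟨hν, haM⟩ := (hsatnu a).mp ha
    obtain ⟨u, hu⟩ := haM
    exact ⟨u, Subtype.ext hu⟩
  -- chain transport
  have hchain : ∀ (n : ℕ) (p q : subdivV Hb s),
      chainRel (fun a b : A'.V => Fml.Sat A T.I.η ![a, b])
        (fun z => Fml.Sat A T.I.ν ![z] ∧ z ∉ M) n ((e p).val) ((e q).val) ↔
      chainRel (subdivG Hb s).Adj (fun z => z ∉ Set.range Sum.inl) n p q := by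
    intro n
    induction n with
    | zero =>
      intro p q
      show Fml.Sat A T.I.η ![(e p).val, (e q).val] ↔ (subdivG Hb s).Adj p q
      exact e.map_adj_iff
    | succ n ih =>
      intro p q
      constructor
      · rintro ⟨z, hxz, ⟨hzν, hzM⟩, hc⟩
        set zh : subdivV Hb s := e.symm ⟨z, hzν⟩ with hzh
        have hz : (e zh).val = z := by
          rw [hzh, e.apply_symm_apply]
        refine ⟨zh, ?_, ?_, ?_⟩
        · have : Fml.Sat A T.I.η ![(e p).val, (e zh).val] := by rw [hz]; exact hxz
          exact e.map_adj_iff.mp this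
        · rintro ⟨u, hu⟩
          apply hzM
          rw [hM]
          exact ⟨u, by rw [hu, hzh, e.apply_symm_apply]⟩
        · have := hc
          rw [← hz] at this
          exact (ih zh q).mp this
      · rintro ⟨zh, hpz, hzh, hc⟩
        refine ⟨(e zh).val, e.map_adj_iff.mpr hpz, ⟨(e zh).2, ?_⟩, (ih zh q).mpr hc⟩
        rintro ⟨u, hu⟩
        apply hzh
        have : e (Sum.inl u) = e zh := Subtype.coe_injective hu
        exact ⟨u, e.injective this⟩
  -- adjacency bridge
  have hadj : ∀ w1 w2 : Hb.V,
      Fml.Sat A' ((T.compose s).I.η)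
        ![(e (Sum.inl w1)).val, (e (Sum.inl w2)).val] ↔ Hb.G.Adj w1 w2 := by
    intro w1 w2
    show Fml.Sat A' (((Fml.not (.eq 0 1)).and
        ((Fml.col (Fin.last T.c) 0).and (Fml.col (Fin.last T.c) 1))).and
      (walkFml (T.I.η.recolor Fin.castSucc) (T.I.ν.recolor Fin.castSucc)
        (Fin.last T.c) s)) ![(e (Sum.inl w1)).val, (e (Sum.inl w2)).val] ↔ _
    rw [Fml.sat_and, Fml.sat_and, Fml.sat_and]; erw [sat_walkFml]
    have hchain' := chainRel_congr
      (E := fun a b : A'.V => Fml.Sat A' (T.I.η.recolor Fin.castSucc) ![a, b])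
      (E' := fun a b : A'.V => Fml.Sat A T.I.η ![a, b])
      (P := fun z : A'.V => Fml.Sat A' (T.I.ν.recolor Fin.castSucc) ![z] ∧
        z ∉ A'.color (Fin.last T.c))
      (P' := fun z : A'.V => Fml.Sat A T.I.ν ![z] ∧ z ∉ M)
      (fun a b => hrecE a b)
      (fun a => and_congr (hrecN a) (by rw [hcolM]; exact Iff.rfl))
      s (e (Sum.inl w1)).val (e (Sum.inl w2)).val
    rw [hchain']
    rw [hchain s (Sum.inl w1) (Sum.inl w2)]
    constructor
    · rintro ⟨⟨hne, -⟩, hch⟩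
      have hne' : w1 ≠ w2 := by
        rintro rfl
        apply hne
        show (![(e (Sum.inl w1)).val, (e (Sum.inl w1)).val] : Fin 2 → A'.V) 0 =
          (![(e (Sum.inl w1)).val, (e (Sum.inl w1)).val] : Fin 2 → A'.V) 1
        simp
        rfl
      exact Subdiv.decode_sound hs hne' hch
    · intro hadj12
      refine ⟨⟨?_, ?_, ?_⟩, Subdiv.decode_complete hs hadj12⟩
      · intro heq
        simp only [Fml.Sat, Matrix.cons_val_zero, Matrix.cons_val_one,
          Matrix.head_cons] at heq
        have : e (Sum.inl w1) = e (Sum.inl w2) := Subtype.coe_injective heq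
        exact hadj12.ne (Sum.inl.inj (e.injective this))
      · show (![(e (Sum.inl w1)).val, (e (Sum.inl w2)).val] : Fin 2 → A'.V) 0
            ∈ A'.color (Fin.last T.c)
        rw [hcolM]
        exact ⟨w1, rfl⟩
      · show (![(e (Sum.inl w1)).val, (e (Sum.inl w2)).val] : Fin 2 → A'.V) 1
            ∈ A'.color (Fin.last T.c)
        rw [hcolM]
        exact ⟨w2, rfl⟩
  exact ⟨Equiv.ofBijective F ⟨hFinj, hFsurj⟩, fun {w1 w2} => hadj w1 w2⟩

/-! ### Enumeration of transductions -/

/-- A numeric code for formulas. -/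
def Fml.toNat {c : ℕ} : {m : ℕ} → Fml c m → ℕ
  | _, .eq i j => Nat.pair 0 (Nat.pair i j)
  | _, .adj i j => Nat.pair 1 (Nat.pair i j)
  | _, .col i x => Nat.pair 2 (Nat.pair i x)
  | _, .not φ => Nat.pair 3 φ.toNat
  | _, .or φ ψ => Nat.pair 4 (Nat.pair φ.toNat ψ.toNat)
  | _, .ex φ => Nat.pair 5 φ.toNat

lemma Fml.toNat_inj {c : ℕ} : ∀ {m : ℕ} (φ ψ : Fml c m), φ.toNat = ψ.toNat → φ = ψ := by
  intro m φ
  induction φ with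
  | eq i j =>
    intro ψ h
    cases ψ <;> simp [Fml.toNat, Nat.pair_eq_pair] at h
    obtain ⟨h1, h2⟩ := h
    rw [Fin.ext h1, Fin.ext h2]
  | adj i j =>
    intro ψ h
    cases ψ <;> simp [Fml.toNat, Nat.pair_eq_pair] at h
    obtain ⟨h1, h2⟩ := h
    rw [Fin.ext h1, Fin.ext h2]
  | col i x =>
    intro ψ h
    cases ψ <;> simp [Fml.toNat, Nat.pair_eq_pair] at h
    obtain ⟨h1, h2⟩ := h
    rw [Fin.ext h1, Fin.ext h2]
  | not φ ih =>
    intro ψ h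
    cases ψ <;> simp [Fml.toNat, Nat.pair_eq_pair] at h
    rw [ih _ h]
  | or φ1 φ2 ih1 ih2 =>
    intro ψ h
    cases ψ <;> simp [Fml.toNat, Nat.pair_eq_pair] at h
    obtain ⟨h1, h2⟩ := h
    rw [ih1 _ h1, ih2 _ h2]
  | ex φ ih =>
    intro ψ h
    cases ψ <;> simp [Fml.toNat, Nat.pair_eq_pair] at h
    rw [ih _ h]

/-- A numeric code for transductions. -/
def Transduction.enc (T : Transduction) : ℕ :=
  Nat.pair T.k (Nat.pair T.c (Nat.pair T.I.ν.toNat T.I.η.toNat))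

lemma Transduction.enc_inj : Function.Injective Transduction.enc := by
  rintro ⟨k1, hk1, c1, I1⟩ ⟨k2, hk2, c2, I2⟩ h
  simp only [Transduction.enc, Nat.pair_eq_pair] at h
  obtain ⟨hk, hc, hν, hη⟩ := h
  subst hk
  subst hc
  obtain ⟨ν1, η1, s1, i1⟩ := I1
  obtain ⟨ν2, η2, s2, i2⟩ := I2
  simp only at hν hη
  have hν' := Fml.toNat_inj _ _ hν
  have hη' := Fml.toNat_inj _ _ hη
  subst hν'
  subst hη'
  rfl

/-- A default transduction. -/
def defaultT : Transduction where
  k := 1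
  kpos := one_pos
  c := 0
  I :=
    { ν := .eq 0 0
      η := .adj 0 1
      symm := fun A u v h => A.G.adj_symm h
      irrefl := fun A v h => A.G.irrefl h }

/-- An enumeration of all transductions. -/
noncomputable def tEnum (n : ℕ) : Transduction :=
  @dite Transduction (∃ T : Transduction, T.enc = n) (Classical.dec _)
    (fun h => h.choose) (fun _ => defaultT)

lemma tEnum_enc (T : Transduction) : tEnum T.enc = T := by
  unfold tEnum
  rw [dif_pos ⟨T, rfl⟩]
  exact Transduction.enc_inj (⟨T, rfl⟩ : ∃ T' : Transduction, T'.enc = T.enc).choose_spec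

/-! ### The statement -/

theorem no_maximum_above_bounded_expansion (B : Set FGraph)
    (h : ∀ C : Set FGraph, IsoClosed C → BoundedExpansion C → SqFO C B) :
    SqFO Set.univ B := by
  by_contra hcon
  unfold SqFO at hcon
  push_neg at hcon
  have hw : ∀ T : Transduction, ∃ Hx : FGraph, Hx ∉ TImage T B := by
    intro T
    obtain ⟨a, -, hna⟩ := Set.not_subset.mp (hcon T)
    exact ⟨a, hna⟩
  set W : ℕ → Transduction := fun n => (tEnum n).compose (n + 1) with hW
  set Hx : ℕ → FGraph := fun n => (hw (W n)).choose with hHx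
  set d : ℕ → FGraph := fun n => subdivF (Hx n) (n + 1) with hd
  set D : Set FGraph := {X | ∃ n, Nonempty (X.G ≃g (d n).G)} with hD
  have hIso : IsoClosed D := by
    rintro G1 G2 ⟨f⟩ ⟨n, ⟨e⟩⟩
    exact ⟨n, ⟨f.symm.trans e⟩⟩
  have hBE : BoundedExpansion D := diag_bounded_expansion d (fun n => ⟨Hx n, rfl⟩)
  obtain ⟨T, hT⟩ := h D hIso hBE
  have hdmem : d T.enc ∈ D := ⟨T.enc, ⟨RelIso.refl _⟩⟩
  obtain ⟨G, hG, hmem⟩ := hT hdmem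
  have hcomp : (T.compose (T.enc + 1)).mem G (Hx T.enc) :=
    T.compose_mem (by omega) G (Hx T.enc) hmem
  have hWmem : Hx T.enc ∈ TImage (W T.enc) B := by
    refine ⟨G, hG, ?_⟩
    show ((tEnum T.enc).compose (T.enc + 1)).mem G (Hx T.enc)
    rw [tEnum_enc T]
    exact hcomp
  exact (hw (W T.enc)).choose_spec hWmem
end
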